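/- arXiv:2209.03931 — 5 statements merged into one kernel-verified Lean document; each statement's English description precedes it below -/
import Mathlib

section
/- If G is a 2-edge-connected, claw-free, diamond-free cubic multigraph of order n containing exactly one pair of vertices {u,v} joined by two parallel edges (and no other parallel edges or loops), then γ_P(G) ≤ (n−2)/6. -/
namespace PaperPD

open SimpleGraph

variable {V : Type} {W : Type}

/-- Observation process for power domination on a simple graph. -/
inductive Observed (G : SimpleGraph V) (S : Set V) : V → Prop
  | mem : ∀ v ∈ S, Observed G S v
  | dom : ∀ u v, u ∈ S → G.Adj u v → Observed G S v
  | prop : ∀ u v, Observed G S u → G.Adj u v →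
      (∀ w, G.Adj u w → w ≠ v → Observed G S w) → Observed G S v

/-- `S` is a power dominating set of `G`. -/
def IsPDS (G : SimpleGraph V) (S : Set V) : Prop := ∀ v, Observed G S v

/-- Power domination number. -/
noncomputable def pdNum (G : SimpleGraph V) [Fintype V] : ℕ :=
  sInf {n | ∃ S : Finset V, S.card = n ∧ IsPDS G ↑S}

/-- Zero forcing process. -/
inductive Forced (G : SimpleGraph V) (S : Set V) : V → Prop
  | mem : ∀ v ∈ S, Forced G S v
  | prop : ∀ u v, Forced G S u → G.Adj u v →
      (∀ w, G.Adj u w → w ≠ v → Forced G S w) → Forced G S v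

/-- Zero forcing number. -/
noncomputable def zNum (G : SimpleGraph V) [Fintype V] : ℕ :=
  sInf {n | ∃ S : Finset V, S.card = n ∧ ∀ v, Forced G S v}

/-- Domination number. -/
noncomputable def domNum (G : SimpleGraph V) [Fintype V] : ℕ :=
  sInf {n | ∃ S : Finset V, S.card = n ∧ ∀ v, ∃ u ∈ S, v = u ∨ G.Adj u v}

/-- No induced `K_{1,3}`. -/
def ClawFree (G : SimpleGraph V) : Prop :=
  ∀ x a b c : V, a ≠ b → a ≠ c → b ≠ c →
    G.Adj x a → G.Adj x b → G.Adj x c →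
    ¬ G.Adj a b → ¬ G.Adj a c → ¬ G.Adj b c → False

/-- No induced `K₄` minus an edge. -/
def DiamondFree (G : SimpleGraph V) : Prop :=
  ∀ a b c d : V, a ≠ b → a ≠ c → a ≠ d → b ≠ c → b ≠ d → c ≠ d →
    G.Adj a b → G.Adj a c → G.Adj b c → G.Adj b d → G.Adj c d →
    ¬ G.Adj a d → False

/-- A leaf: a vertex with exactly one neighbor. -/
def IsLeaf (G : SimpleGraph V) (v : V) : Prop := ∃! u, G.Adj v u

/-- A strong support vertex: adjacent to at least two leaves. -/
def IsStrongSupport (G : SimpleGraph V) (x : V) : Prop :=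
  ∃ a b, a ≠ b ∧ G.Adj x a ∧ G.Adj x b ∧ IsLeaf G a ∧ IsLeaf G b

/-- Number of strong support vertices. -/
noncomputable def ssCount (G : SimpleGraph V) : ℕ :=
  Nat.card {v // IsStrongSupport G v}

/-- Connected with no bridges. -/
def TwoEdgeConnected (G : SimpleGraph V) : Prop :=
  G.Connected ∧ ∀ e, ¬ G.IsBridge e

/-- A loopless multigraph, given by symmetric edge multiplicities. -/
structure Multigraph (W : Type) where
  mult : W → W → ℕ
  symm : ∀ u v, mult u v = mult v u
  loopless : ∀ v, mult v v = 0

/-- Underlying simple graph of a multigraph. -/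
def Multigraph.toSimple (M : Multigraph W) : SimpleGraph W where
  Adj u v := u ≠ v ∧ 0 < M.mult u v
  symm := by constructor; intro u v h; exact ⟨h.1.symm, by rw [M.symm]; exact h.2⟩
  loopless := by constructor; intro v h; exact h.1 rfl

/-- Degree of a vertex in a multigraph (counting multiplicities). -/
def Multigraph.degree [Fintype W] (M : Multigraph W) (v : W) : ℕ :=
  ∑ u, M.mult v u

/-- Bridgeless multigraph: no single edge is a cut edge (a parallel edge
is never a bridge). -/
def Multigraph.Bridgeless (M : Multigraph W) : Prop :=
  ∀ u v, M.mult u v = 1 → ¬ M.toSimple.IsBridge s(u, v)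

/-- A 2-factor of a multigraph, given by sub-multiplicities. -/
def Multigraph.IsTwoFactor [Fintype W] (M : Multigraph W) (f : W → W → ℕ) : Prop :=
  (∀ u v, f u v ≤ M.mult u v) ∧ (∀ u v, f u v = f v u) ∧ (∀ v, ∑ u, f v u = 2)

/-- Observation process for power domination on a multigraph: propagation
only happens along single edges. -/
inductive MObserved (M : Multigraph W) (S : Set W) : W → Prop
  | mem : ∀ v ∈ S, MObserved M S v
  | dom : ∀ u v, u ∈ S → 0 < M.mult u v → MObserved M S v
  | prop : ∀ u v, MObserved M S u → M.mult u v = 1 →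
      (∀ w, 0 < M.mult u w → w ≠ v → MObserved M S w) → MObserved M S v

/-- Power domination number of a multigraph. -/
noncomputable def mpdNum (M : Multigraph W) [Fintype W] : ℕ :=
  sInf {n | ∃ S : Finset W, S.card = n ∧ ∀ v, MObserved M ↑S v}

/-- Auxiliary: a set closed under adjacency absorbs reachability. -/
lemma reach_closed {V : Type} {G' : SimpleGraph V} {O : Set V}
    (hcl : ∀ a b, a ∈ O → G'.Adj a b → b ∈ O) {a b : V} (h : G'.Reachable a b) :
    a ∈ O → b ∈ O := by
  obtain ⟨p⟩ := h
  induction p with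
  | nil => exact id
  | cons h' q ih => exact fun ha => ih (hcl _ _ ha h')

set_option maxHeartbeats 3200000 in
theorem stmt2 {W : Type} [Fintype W] (M : Multigraph W)
    (hcubic : ∀ v, M.degree v = 3)
    (hclaw : ClawFree M.toSimple) (hdiam : DiamondFree M.toSimple)
    (hconn : M.toSimple.Connected) (hbridgeless : M.Bridgeless)
    (u v : W) (huv : u ≠ v) (h2 : M.mult u v = 2)
    (hmax : ∀ a b, M.mult a b ≤ 2)
    (huniq : ∀ a b, M.mult a b = 2 → (a = u ∧ b = v) ∨ (a = v ∧ b = u)) :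
    (mpdNum M : ℚ) ≤ ((Fintype.card W : ℚ) - 2) / 6 := by
  classical
  have hms : ∀ a b : W, M.mult a b = M.mult b a := M.symm
  have hsum : ∀ w : W, ∑ z, M.mult w z = 3 := fun w => hcubic w
  have hle1 : ∀ a b : W, (a ≠ u ∧ a ≠ v) ∨ (b ≠ u ∧ b ≠ v) → M.mult a b ≤ 1 := by
    intro a b h
    by_contra hgt
    have ha2 : M.mult a b = 2 := le_antisymm (hmax a b) (by omega)
    rcases huniq a b ha2 with ⟨h1', h2'⟩ | ⟨h1', h2'⟩ <;> tauto
  set NB : W → Finset W := fun w => Finset.univ.filter (fun z => 0 < M.mult w z) with hNBdef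
  have hNBmem : ∀ w z : W, z ∈ NB w ↔ 0 < M.mult w z := by
    intro w z; rw [hNBdef]; simp
  have hNBne : ∀ w z : W, z ∈ NB w → z ≠ w := by
    intro w z hz h
    have h1 := (hNBmem w z).mp hz
    rw [h, M.loopless] at h1; omega
  have hNB3 : ∀ w : W, w ≠ u → w ≠ v → (NB w).card = 3 := by
    intro w h1 h1'
    have hone : ∀ z ∈ NB w, M.mult w z = 1 := by
      intro z hz
      have ha := (hNBmem w z).mp hz
      have hb := hle1 w z (Or.inl ⟨h1, h1'⟩)
      omega
    have hsumf : ∑ z ∈ NB w, M.mult w z = 3 := by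
      rw [hNBdef]
      rw [Finset.sum_filter_of_ne (fun x _ hx => by omega)]
      exact hsum w
    calc (NB w).card = ∑ z ∈ NB w, 1 := by rw [Finset.card_eq_sum_ones]
    _ = ∑ z ∈ NB w, M.mult w z := (Finset.sum_congr rfl hone).symm
    _ = 3 := hsumf
  -- the third neighbor of u
  have hxE : ∃ x' : W, M.mult u x' = 1 ∧ x' ≠ u ∧ x' ≠ v ∧
      ∀ z, 0 < M.mult u z → z = v ∨ z = x' := by
    have h3 := hsum u
    have hadd := Finset.sum_erase_add Finset.univ (M.mult u) (Finset.mem_univ v)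
    rw [h2] at hadd
    have hne : ∑ z ∈ Finset.univ.erase v, M.mult u z ≠ 0 := by omega
    obtain ⟨x', hx'mem, hx'ne⟩ := Finset.exists_ne_zero_of_sum_ne_zero hne
    have hle : M.mult u x' ≤ 1 := by
      have := Finset.single_le_sum (f := M.mult u) (fun i _ => Nat.zero_le _) hx'mem
      omega
    have hx'1 : M.mult u x' = 1 := by omega
    have hadd2 := Finset.sum_erase_add (Finset.univ.erase v) (M.mult u) hx'mem
    have hrest : ∑ z ∈ (Finset.univ.erase v).erase x', M.mult u z = 0 := by omega
    refine ⟨x', hx'1, ?_, (Finset.mem_erase.mp hx'mem).1, ?_⟩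
    · intro h
      rw [h, M.loopless] at hx'1; omega
    · intro z hz
      by_contra hcon
      push_neg at hcon
      have hzmem : z ∈ (Finset.univ.erase v).erase x' := by
        rw [Finset.mem_erase, Finset.mem_erase]
        exact ⟨hcon.2, hcon.1, Finset.mem_univ z⟩
      have := (Finset.sum_eq_zero_iff.mp hrest) z hzmem
      omega
  obtain ⟨x, hux, hxu, hxv, hNu⟩ := hxE
  -- the third neighbor of v
  have hyE : ∃ y' : W, M.mult v y' = 1 ∧ y' ≠ u ∧ y' ≠ v ∧
      ∀ z, 0 < M.mult v z → z = u ∨ z = y' := by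
    have h3 := hsum v
    have hvu : M.mult v u = 2 := by rw [hms]; exact h2
    have hadd := Finset.sum_erase_add Finset.univ (M.mult v) (Finset.mem_univ u)
    rw [hvu] at hadd
    have hne : ∑ z ∈ Finset.univ.erase u, M.mult v z ≠ 0 := by omega
    obtain ⟨y', hy'mem, hy'ne⟩ := Finset.exists_ne_zero_of_sum_ne_zero hne
    have hle : M.mult v y' ≤ 1 := by
      have := Finset.single_le_sum (f := M.mult v) (fun i _ => Nat.zero_le _) hy'mem
      omega
    have hy'1 : M.mult v y' = 1 := by omega
    have hadd2 := Finset.sum_erase_add (Finset.univ.erase u) (M.mult v) hy'mem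
    have hrest : ∑ z ∈ (Finset.univ.erase u).erase y', M.mult v z = 0 := by omega
    refine ⟨y', hy'1, (Finset.mem_erase.mp hy'mem).1, ?_, ?_⟩
    · intro h
      rw [h, M.loopless] at hy'1; omega
    · intro z hz
      by_contra hcon
      push_neg at hcon
      have hzmem : z ∈ (Finset.univ.erase u).erase y' := by
        rw [Finset.mem_erase, Finset.mem_erase]
        exact ⟨hcon.2, hcon.1, Finset.mem_univ z⟩
      have := (Finset.sum_eq_zero_iff.mp hrest) z hzmem
      omega
  obtain ⟨y, hvy, hyu, hyv, hNv⟩ := hyE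
  -- bridge extraction
  have hbridge_reach : ∀ a b : W, M.mult a b = 1 →
      (M.toSimple \ SimpleGraph.fromEdgeSet {s(a, b)}).Reachable a b := by
    intro a b hab
    have hne : a ≠ b := by
      intro h; rw [h, M.loopless] at hab; omega
    have hadj : M.toSimple.Adj a b := ⟨hne, by omega⟩
    have hnb := hbridgeless a b hab
    rw [SimpleGraph.isBridge_iff] at hnb
    by_contra hcon
    exact hnb hcon
  have hGsub : ∀ a b c d : W,
      (M.toSimple \ SimpleGraph.fromEdgeSet {s(a, b)}).Adj c d →
      M.toSimple.Adj c d ∧ s(c, d) ≠ s(a, b) := by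
    intro a b c d h
    rw [SimpleGraph.sdiff_adj] at h
    refine ⟨h.1, fun he => h.2 ?_⟩
    rw [SimpleGraph.fromEdgeSet_adj]
    exact ⟨by simp [he], h.1.ne⟩
  -- no common neighbor of u and v
  have hno_common : ∀ w : W, 0 < M.mult u w → 0 < M.mult v w → False := by
    intro w hw1 hw2
    rcases hNu w hw1 with h | hwx
    · rw [h] at hw2; rw [M.loopless] at hw2; omega
    · rcases hNv w hw2 with h | hwy
      · rw [h] at hw1; rw [M.loopless] at hw1; omega
      · have hwu : w ≠ u := by rw [hwx]; exact hxu
        have hwv : w ≠ v := by rw [hwx]; exact hxv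
        have hNu' : ∀ z, 0 < M.mult u z → z = v ∨ z = w := by
          intro z hz
          rcases hNu z hz with h | h
          · exact Or.inl h
          · exact Or.inr (by rw [h, ← hwx])
        have hNv' : ∀ z, 0 < M.mult v z → z = u ∨ z = w := by
          intro z hz
          rcases hNv z hz with h | h
          · exact Or.inl h
          · exact Or.inr (by rw [h, ← hwy])
        have hsub : ({u, v} : Finset W) ⊆ NB w := by
          intro z hz
          rw [Finset.mem_insert, Finset.mem_singleton] at hz
          rcases hz with h | h
          · rw [h, hNBmem, hms]; omega
          · rw [h, hNBmem, hms]; omega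
        have hcard1 : (NB w \ {u, v}).card = 1 := by
          rw [Finset.card_sdiff_of_subset hsub, hNB3 w hwu hwv, Finset.card_pair huv]
        obtain ⟨z, hz⟩ := Finset.card_eq_one.mp hcard1
        have hzmem : z ∈ NB w ∧ z ∉ ({u, v} : Finset W) := by
          have hzz : z ∈ NB w \ {u, v} := by rw [hz]; exact Finset.mem_singleton_self z
          exact Finset.mem_sdiff.mp hzz
        have hzu : z ≠ u := fun h => hzmem.2 (by simp [h])
        have hzv : z ≠ v := fun h => hzmem.2 (by simp [h])
        have hzw : z ≠ w := hNBne w z hzmem.1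
        have hwz1 : M.mult w z = 1 := by
          have ha := (hNBmem w z).mp hzmem.1
          have hb := hle1 w z (Or.inl ⟨hwu, hwv⟩)
          omega
        have hc3 : ({u, v, z} : Finset W).card = 3 := by
          rw [Finset.card_insert_of_notMem (by simp [huv, Ne.symm hzu]),
            Finset.card_insert_of_notMem (by simp [Ne.symm hzv]), Finset.card_singleton]
        have hNBw : NB w = {u, v, z} := by
          refine (Finset.eq_of_subset_of_card_le ?_ ?_).symm
          · intro w' hw'
            rw [Finset.mem_insert, Finset.mem_insert, Finset.mem_singleton] at hw'
            rcases hw' with h | h | h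
            · rw [h, hNBmem, hms]; omega
            · rw [h, hNBmem, hms]; omega
            · rw [h]; exact hzmem.1
          · rw [hNB3 w hwu hwv, hc3]
        have hreach := hbridge_reach w z hwz1
        have hcl : ∀ a b : W, a ∈ ({w, u, v} : Set W) →
            (M.toSimple \ SimpleGraph.fromEdgeSet {s(w, z)}).Adj a b →
            b ∈ ({w, u, v} : Set W) := by
          intro a b ha hab
          obtain ⟨hadj, hnee⟩ := hGsub w z a b hab
          simp only [Set.mem_insert_iff, Set.mem_singleton_iff] at ha ⊢
          rcases ha with h | h | h
          · rw [h] at hadj hnee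
            have hb : b ∈ NB w := (hNBmem w b).mpr hadj.2
            rw [hNBw] at hb
            simp only [Finset.mem_insert, Finset.mem_singleton] at hb
            rcases hb with h' | h' | h'
            · tauto
            · tauto
            · exact absurd (by rw [h']) hnee
          · rw [h] at hadj
            rcases hNu' b hadj.2 with h' | h' <;> tauto
          · rw [h] at hadj
            rcases hNv' b hadj.2 with h' | h' <;> tauto
        have hfin := reach_closed hcl hreach (by simp)
        simp only [Set.mem_insert_iff, Set.mem_singleton_iff] at hfin
        rcases hfin with h | h | h
        · exact hzw h
        · exact hzu h
        · exact hzv h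
  have hxy : x ≠ y := by
    intro h
    refine hno_common x (by rw [hux]; norm_num) ?_
    rw [h, hvy]
    norm_num
  -- mates of a vertex avoid u and v
  have hpq_uv : ∀ w p q : W, w ≠ u → w ≠ v → M.toSimple.Adj w p → M.toSimple.Adj w q →
      M.toSimple.Adj p q → p ≠ u ∧ p ≠ v := by
    intro w p q hw1 hw2 hwp hwq hpq
    constructor
    · intro hp
      rw [hp] at hwp hpq
      rcases hNu q hpq.2 with h | h
      · rw [h] at hwq
        exact hno_common w (by rw [hms]; exact hwp.2) (by rw [hms]; exact hwq.2)
      · have hq0 : 0 < M.mult u w := by rw [hms]; exact hwp.2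
        rcases hNu w hq0 with h' | h'
        · exact hw2 h'
        · exact hwq.1 (by rw [h', ← h])
    · intro hp
      rw [hp] at hwp hpq
      rcases hNv q hpq.2 with h | h
      · rw [h] at hwq
        exact hno_common w (by rw [hms]; exact hwq.2) (by rw [hms]; exact hwp.2)
      · have hq0 : 0 < M.mult v w := by rw [hms]; exact hwp.2
        rcases hNv w hq0 with h' | h'
        · exact hw1 h'
        · exact hwq.1 (by rw [h', ← h])
  -- the diamond / K4 lemma
  have hD : ∀ w p q r : W, w ≠ u → w ≠ v → M.toSimple.Adj w p → M.toSimple.Adj w q →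
      M.toSimple.Adj w r → M.toSimple.Adj p q → M.toSimple.Adj p r → q ≠ r → False := by
    intro w p q r hw1 hw2 hwp hwq hwr hpq hpr hqr
    have hpu := hpq_uv w p q hw1 hw2 hwp hwq hpq
    have hqu := hpq_uv w q p hw1 hw2 hwq hwp hpq.symm
    have hru := hpq_uv w r p hw1 hw2 hwr hwp hpr.symm
    by_cases hA : M.toSimple.Adj q r
    · have hc3a : ({p, q, r} : Finset W).card = 3 := by
        rw [Finset.card_insert_of_notMem (by simp [hpq.ne, hpr.ne]),
          Finset.card_insert_of_notMem (by simp [hqr]), Finset.card_singleton]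
      have hc3b : ({w, q, r} : Finset W).card = 3 := by
        rw [Finset.card_insert_of_notMem (by simp [hwq.ne, hwr.ne]),
          Finset.card_insert_of_notMem (by simp [hqr]), Finset.card_singleton]
      have hc3c : ({w, p, r} : Finset W).card = 3 := by
        rw [Finset.card_insert_of_notMem (by simp [hwp.ne, hwr.ne]),
          Finset.card_insert_of_notMem (by simp [hpr.ne]), Finset.card_singleton]
      have hc3d : ({w, p, q} : Finset W).card = 3 := by
        rw [Finset.card_insert_of_notMem (by simp [hwp.ne, hwq.ne]),
          Finset.card_insert_of_notMem (by simp [hpq.ne]), Finset.card_singleton]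
      have hNw : NB w = {p, q, r} := by
        refine (Finset.eq_of_subset_of_card_le ?_ ?_).symm
        · intro z hz
          rw [Finset.mem_insert, Finset.mem_insert, Finset.mem_singleton] at hz
          rcases hz with h | h | h
          · rw [h]; exact (hNBmem w p).mpr hwp.2
          · rw [h]; exact (hNBmem w q).mpr hwq.2
          · rw [h]; exact (hNBmem w r).mpr hwr.2
        · rw [hNB3 w hw1 hw2, hc3a]
      have hNp : NB p = {w, q, r} := by
        refine (Finset.eq_of_subset_of_card_le ?_ ?_).symm
        · intro z hz
          rw [Finset.mem_insert, Finset.mem_insert, Finset.mem_singleton] at hz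
          rcases hz with h | h | h
          · rw [h]; exact (hNBmem p w).mpr hwp.symm.2
          · rw [h]; exact (hNBmem p q).mpr hpq.2
          · rw [h]; exact (hNBmem p r).mpr hpr.2
        · rw [hNB3 p hpu.1 hpu.2, hc3b]
      have hNq : NB q = {w, p, r} := by
        refine (Finset.eq_of_subset_of_card_le ?_ ?_).symm
        · intro z hz
          rw [Finset.mem_insert, Finset.mem_insert, Finset.mem_singleton] at hz
          rcases hz with h | h | h
          · rw [h]; exact (hNBmem q w).mpr hwq.symm.2
          · rw [h]; exact (hNBmem q p).mpr hpq.symm.2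
          · rw [h]; exact (hNBmem q r).mpr hA.2
        · rw [hNB3 q hqu.1 hqu.2, hc3c]
      have hNr : NB r = {w, p, q} := by
        refine (Finset.eq_of_subset_of_card_le ?_ ?_).symm
        · intro z hz
          rw [Finset.mem_insert, Finset.mem_insert, Finset.mem_singleton] at hz
          rcases hz with h | h | h
          · rw [h]; exact (hNBmem r w).mpr hwr.symm.2
          · rw [h]; exact (hNBmem r p).mpr hpr.symm.2
          · rw [h]; exact (hNBmem r q).mpr hA.symm.2
        · rw [hNB3 r hru.1 hru.2, hc3d]
      have hcl : ∀ a b0 : W, a ∈ ({w, p, q, r} : Set W) → M.toSimple.Adj a b0 →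
          b0 ∈ ({w, p, q, r} : Set W) := by
        intro a b0 ha hadj
        simp only [Set.mem_insert_iff, Set.mem_singleton_iff] at ha ⊢
        rcases ha with h | h | h | h
        · rw [h] at hadj
          have hb : b0 ∈ NB w := (hNBmem w b0).mpr hadj.2
          rw [hNw] at hb
          simp only [Finset.mem_insert, Finset.mem_singleton] at hb
          tauto
        · rw [h] at hadj
          have hb : b0 ∈ NB p := (hNBmem p b0).mpr hadj.2
          rw [hNp] at hb
          simp only [Finset.mem_insert, Finset.mem_singleton] at hb
          tauto
        · rw [h] at hadj
          have hb : b0 ∈ NB q := (hNBmem q b0).mpr hadj.2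
          rw [hNq] at hb
          simp only [Finset.mem_insert, Finset.mem_singleton] at hb
          tauto
        · rw [h] at hadj
          have hb : b0 ∈ NB r := (hNBmem r b0).mpr hadj.2
          rw [hNr] at hb
          simp only [Finset.mem_insert, Finset.mem_singleton] at hb
          tauto
      have hfin := reach_closed hcl (hconn.preconnected w u) (by simp)
      simp only [Set.mem_insert_iff, Set.mem_singleton_iff] at hfin
      rcases hfin with h | h | h | h
      · exact hw1 h.symm
      · exact hpu.1 h.symm
      · exact hqu.1 h.symm
      · exact hru.1 h.symm
    · exact hdiam q w p r hwq.ne' hpq.symm.ne hqr hwp.ne hwr.ne hpr.ne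
        hwq.symm hpq.symm hwp hwr hpr hA
  -- uniqueness of the adjacent pair among neighbors
  have huniq2 : ∀ w p q p' q' : W, w ≠ u → w ≠ v →
      M.toSimple.Adj w p → M.toSimple.Adj w q → M.toSimple.Adj p q →
      M.toSimple.Adj w p' → M.toSimple.Adj w q' → M.toSimple.Adj p' q' →
      (p' = p ∧ q' = q) ∨ (p' = q ∧ q' = p) := by
    intro w p q p' q' hw1 hw2 hwp hwq hpq hwp' hwq' hpq'
    by_cases h1 : p' = p
    · by_cases hqq : q' = q
      · exact Or.inl ⟨h1, hqq⟩
      · rw [h1] at hpq'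
        exact absurd (hD w p q q' hw1 hw2 hwp hwq hwq' hpq hpq' (Ne.symm hqq)) id
    · by_cases h3 : p' = q
      · by_cases h4 : q' = p
        · exact Or.inr ⟨h3, h4⟩
        · rw [h3] at hpq'
          exact absurd (hD w q p q' hw1 hw2 hwq hwp hwq' hpq.symm hpq' (Ne.symm h4)) id
      · by_cases h5 : q' = p
        · rw [h5] at hpq'
          exact absurd (hD w p q p' hw1 hw2 hwp hwq hwp' hpq hpq'.symm (Ne.symm h3)) id
        · by_cases h6 : q' = q
          · rw [h6] at hpq'
            exact absurd (hD w q p p' hw1 hw2 hwq hwp hwp' hpq.symm hpq'.symm (Ne.symm h1)) id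
          · have hsub : ({p, q, p', q'} : Finset W) ⊆ NB w := by
              intro z hz
              rw [Finset.mem_insert, Finset.mem_insert, Finset.mem_insert,
                Finset.mem_singleton] at hz
              rcases hz with h | h | h | h
              · rw [h]; exact (hNBmem w p).mpr hwp.2
              · rw [h]; exact (hNBmem w q).mpr hwq.2
              · rw [h]; exact (hNBmem w p').mpr hwp'.2
              · rw [h]; exact (hNBmem w q').mpr hwq'.2
            have hc4 : ({p, q, p', q'} : Finset W).card = 4 := by
              rw [Finset.card_insert_of_notMem (by simp [hpq.ne, Ne.symm h1, Ne.symm h5]),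
                Finset.card_insert_of_notMem (by simp [Ne.symm h3, Ne.symm h6]),
                Finset.card_insert_of_notMem (by simp [hpq'.ne]), Finset.card_singleton]
            have hle4 := Finset.card_le_card hsub
            rw [hc4, hNB3 w hw1 hw2] at hle4
            omega
  -- choose the two triangle mates
  have hpairE : ∀ w : W, w ≠ u → w ≠ v → ∃ p q : W,
      M.toSimple.Adj w p ∧ M.toSimple.Adj w q ∧ M.toSimple.Adj p q := by
    intro w h1 h1'
    obtain ⟨a, b, c, hab, hac, hbc, hNBw⟩ := Finset.card_eq_three.mp (hNB3 w h1 h1')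
    have hamem : a ∈ NB w := by rw [hNBw]; simp
    have hbmem : b ∈ NB w := by rw [hNBw]; simp
    have hcmem : c ∈ NB w := by rw [hNBw]; simp
    have hwa : M.toSimple.Adj w a := ⟨Ne.symm (hNBne w a hamem), (hNBmem w a).mp hamem⟩
    have hwb : M.toSimple.Adj w b := ⟨Ne.symm (hNBne w b hbmem), (hNBmem w b).mp hbmem⟩
    have hwc : M.toSimple.Adj w c := ⟨Ne.symm (hNBne w c hcmem), (hNBmem w c).mp hcmem⟩
    by_cases hd1 : M.toSimple.Adj a b
    · exact ⟨a, b, hwa, hwb, hd1⟩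
    · by_cases hd2 : M.toSimple.Adj a c
      · exact ⟨a, c, hwa, hwc, hd2⟩
      · by_cases hd3 : M.toSimple.Adj b c
        · exact ⟨b, c, hwb, hwc, hd3⟩
        · exact absurd (hclaw w a b c hab hac hbc hwa hwb hwc hd1 hd2 hd3) id
  choose! ma mb hadj1 hadj2 hadj3 using hpairE
  have hma_uv : ∀ w : W, w ≠ u → w ≠ v → ma w ≠ u ∧ ma w ≠ v :=
    fun w h1 h2' => hpq_uv w (ma w) (mb w) h1 h2' (hadj1 w h1 h2') (hadj2 w h1 h2') (hadj3 w h1 h2')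
  have hmb_uv : ∀ w : W, w ≠ u → w ≠ v → mb w ≠ u ∧ mb w ≠ v :=
    fun w h1 h2' => hpq_uv w (mb w) (ma w) h1 h2' (hadj2 w h1 h2') (hadj1 w h1 h2')
      (hadj3 w h1 h2').symm
  -- choose the external neighbor
  have hexE : ∀ w : W, w ≠ u → w ≠ v → ∃ e : W, e ≠ w ∧ e ≠ ma w ∧ e ≠ mb w ∧
      0 < M.mult w e ∧ ∀ z, 0 < M.mult w z → z = ma w ∨ z = mb w ∨ z = e := by
    intro w h1 h2'
    have hsub : ({ma w, mb w} : Finset W) ⊆ NB w := by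
      intro z hz
      rw [Finset.mem_insert, Finset.mem_singleton] at hz
      rcases hz with h | h
      · rw [h]; exact (hNBmem w (ma w)).mpr (hadj1 w h1 h2').2
      · rw [h]; exact (hNBmem w (mb w)).mpr (hadj2 w h1 h2').2
    have hcard1 : (NB w \ {ma w, mb w}).card = 1 := by
      rw [Finset.card_sdiff_of_subset hsub, hNB3 w h1 h2', Finset.card_pair (hadj3 w h1 h2').ne]
    obtain ⟨e, he⟩ := Finset.card_eq_one.mp hcard1
    have hemem : e ∈ NB w ∧ e ∉ ({ma w, mb w} : Finset W) := by
      have hee : e ∈ NB w \ {ma w, mb w} := by rw [he]; exact Finset.mem_singleton_self e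
      exact Finset.mem_sdiff.mp hee
    have hea : e ≠ ma w := fun h => hemem.2 (by simp [h])
    have heb : e ≠ mb w := fun h => hemem.2 (by simp [h])
    refine ⟨e, hNBne w e hemem.1, hea, heb, (hNBmem w e).mp hemem.1, ?_⟩
    intro z hz
    have hzN : z ∈ NB w := (hNBmem w z).mpr hz
    have hc3 : ({ma w, mb w, e} : Finset W).card = 3 := by
      rw [Finset.card_insert_of_notMem (by simp [(hadj3 w h1 h2').ne, Ne.symm hea]),
        Finset.card_insert_of_notMem (by simp [Ne.symm heb]), Finset.card_singleton]
    have hNBw : NB w = {ma w, mb w, e} := by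
      refine (Finset.eq_of_subset_of_card_le ?_ ?_).symm
      · intro z' hz'
        rw [Finset.mem_insert, Finset.mem_insert, Finset.mem_singleton] at hz'
        rcases hz' with h | h | h
        · rw [h]; exact hsub (by simp)
        · rw [h]; exact hsub (by simp)
        · rw [h]; exact hemem.1
      · rw [hNB3 w h1 h2', hc3]
    rw [hNBw] at hzN
    rw [Finset.mem_insert, Finset.mem_insert, Finset.mem_singleton] at hzN
    exact hzN
  choose! ex hexw hexa hexb hexpos hexchar using hexE
  -- triangles
  set TriF : W → Finset W := fun w => ({w, ma w, mb w} : Finset W) with hTriFdef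
  have hTmem : ∀ w z : W, z ∈ TriF w ↔ z = w ∨ z = ma w ∨ z = mb w := by
    intro w z; rw [hTriFdef]; simp
  have htriw : ∀ w : W, w ∈ TriF w := by intro w; rw [hTmem]; left; rfl
  have htri_card : ∀ w : W, w ≠ u → w ≠ v → (TriF w).card = 3 := by
    intro w h1 h2'
    show ({w, ma w, mb w} : Finset W).card = 3
    rw [Finset.card_insert_of_notMem (by simp [(hadj1 w h1 h2').ne, (hadj2 w h1 h2').ne]),
      Finset.card_insert_of_notMem (by simp [(hadj3 w h1 h2').ne]), Finset.card_singleton]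
  have htri_uv : ∀ w : W, w ≠ u → w ≠ v → ∀ z ∈ TriF w, z ≠ u ∧ z ≠ v := by
    intro w h1 h2' z hz
    rw [hTmem] at hz
    rcases hz with rfl | rfl | rfl
    · exact ⟨h1, h2'⟩
    · exact hma_uv w h1 h2'
    · exact hmb_uv w h1 h2'
  have hmult_in_tri : ∀ w : W, w ≠ u → w ≠ v → ∀ z ∈ TriF w, z ≠ w → M.mult w z = 1 := by
    intro w h1 h2' z hz hzw
    rw [hTmem] at hz
    have hpos : 0 < M.mult w z := by
      rcases hz with rfl | rfl | rfl
      · exact absurd rfl hzw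
      · exact (hadj1 w h1 h2').2
      · exact (hadj2 w h1 h2').2
    have := hle1 w z (Or.inl ⟨h1, h2'⟩)
    omega
  have hext_not_tri : ∀ w : W, w ≠ u → w ≠ v → ex w ∉ TriF w := by
    intro w h1 h2' hmem
    rw [hTmem] at hmem
    rcases hmem with h | h | h
    · exact hexw w h1 h2' h
    · exact hexa w h1 h2' h
    · exact hexb w h1 h2' h
  have hmult_ex : ∀ w : W, w ≠ u → w ≠ v → M.mult w (ex w) = 1 := by
    intro w h1 h2'
    have ha := hexpos w h1 h2'
    have hb := hle1 w (ex w) (Or.inl ⟨h1, h2'⟩)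
    omega
  have htri_eq : ∀ w : W, w ≠ u → w ≠ v → ∀ z ∈ TriF w, TriF z = TriF w := by
    intro w h1 h2' z hz
    rw [hTmem] at hz
    rcases hz with rfl | rfl | rfl
    · rfl
    · have hz1 := (hma_uv w h1 h2').1
      have hz2 := (hma_uv w h1 h2').2
      have hres := huniq2 (ma w) w (mb w) (ma (ma w)) (mb (ma w)) hz1 hz2
        (hadj1 w h1 h2').symm (hadj3 w h1 h2') (hadj2 w h1 h2')
        (hadj1 (ma w) hz1 hz2) (hadj2 (ma w) hz1 hz2) (hadj3 (ma w) hz1 hz2)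
      rcases hres with ⟨e1, e2⟩ | ⟨e1, e2⟩ <;>
        · apply Finset.ext
          intro a
          rw [hTmem, hTmem, e1, e2]
          tauto
    · have hz1 := (hmb_uv w h1 h2').1
      have hz2 := (hmb_uv w h1 h2').2
      have hres := huniq2 (mb w) w (ma w) (ma (mb w)) (mb (mb w)) hz1 hz2
        (hadj2 w h1 h2').symm (hadj3 w h1 h2').symm (hadj1 w h1 h2')
        (hadj1 (mb w) hz1 hz2) (hadj2 (mb w) hz1 hz2) (hadj3 (mb w) hz1 hz2)
      rcases hres with ⟨e1, e2⟩ | ⟨e1, e2⟩ <;>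
        · apply Finset.ext
          intro a
          rw [hTmem, hTmem, e1, e2]
          tauto
  have horient : ∀ w z : W, w ≠ u → w ≠ v → 0 < M.mult w z → z ∉ TriF w → z = ex w := by
    intro w z h1 h2' hpos hnot
    rcases hexchar w h1 h2' z hpos with h | h | h
    · exact absurd (by rw [hTmem]; right; left; exact h) hnot
    · exact absurd (by rw [hTmem]; right; right; exact h) hnot
    · exact h
  have hu_ext : ex x = u := by
    have hnt : u ∉ TriF x := fun h => (htri_uv x hxu hxv u h).1 rfl
    exact (horient x u hxu hxv (by rw [hms]; omega) hnt).symm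
  have hv_ext : ex y = v := by
    have hnt : v ∉ TriF y := fun h => (htri_uv y hyu hyv v h).2 rfl
    exact (horient y v hyu hyv (by rw [hms]; omega) hnt).symm
  -- x and y are in different triangles
  have hTxTy : y ∉ TriF x := by
    intro hy
    have hyx : y ≠ x := Ne.symm hxy
    have aux : ∀ b : W, M.toSimple.Adj x y → M.toSimple.Adj x b → M.toSimple.Adj y b → False := by
      intro b hxya hxb hyb
      have hbuv := hpq_uv x b y hxu hxv hxb hxya hyb.symm
      have hc3x : ({u, y, b} : Finset W).card = 3 := by
        rw [Finset.card_insert_of_notMem (by simp [Ne.symm hyu, Ne.symm hbuv.1]),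
          Finset.card_insert_of_notMem (by simp [hyb.ne]), Finset.card_singleton]
      have hNx : NB x = {u, y, b} := by
        refine (Finset.eq_of_subset_of_card_le ?_ ?_).symm
        · intro z hz
          rw [Finset.mem_insert, Finset.mem_insert, Finset.mem_singleton] at hz
          rcases hz with h | h | h
          · rw [h, hNBmem, hms]; omega
          · rw [h]; exact (hNBmem x y).mpr hxya.2
          · rw [h]; exact (hNBmem x b).mpr hxb.2
        · rw [hNB3 x hxu hxv, hc3x]
      have hc3y : ({x, b, v} : Finset W).card = 3 := by
        rw [Finset.card_insert_of_notMem (by simp [hxb.ne, hxv]),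
          Finset.card_insert_of_notMem (by simp [hbuv.2]), Finset.card_singleton]
      have hNy : NB y = {x, b, v} := by
        refine (Finset.eq_of_subset_of_card_le ?_ ?_).symm
        · intro z hz
          rw [Finset.mem_insert, Finset.mem_insert, Finset.mem_singleton] at hz
          rcases hz with h | h | h
          · rw [h]; exact (hNBmem y x).mpr hxya.symm.2
          · rw [h]; exact (hNBmem y b).mpr hyb.2
          · rw [h, hNBmem, hms]; omega
        · rw [hNB3 y hyu hyv, hc3y]
      have hsubb : ({x, y} : Finset W) ⊆ NB b := by
        intro z hz
        rw [Finset.mem_insert, Finset.mem_singleton] at hz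
        rcases hz with h | h
        · rw [h, hNBmem, hms]; exact hxb.2
        · rw [h, hNBmem, hms]; exact hyb.2
      have hcard1 : (NB b \ {x, y}).card = 1 := by
        rw [Finset.card_sdiff_of_subset hsubb, hNB3 b hbuv.1 hbuv.2, Finset.card_pair hxy]
      obtain ⟨c, hc⟩ := Finset.card_eq_one.mp hcard1
      have hcmem : c ∈ NB b ∧ c ∉ ({x, y} : Finset W) := by
        have hcc : c ∈ NB b \ {x, y} := by rw [hc]; exact Finset.mem_singleton_self c
        exact Finset.mem_sdiff.mp hcc
      have hcx : c ≠ x := fun h => hcmem.2 (by simp [h])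
      have hcy : c ≠ y := fun h => hcmem.2 (by simp [h])
      have hcb : c ≠ b := hNBne b c hcmem.1
      have hcu : c ≠ u := by
        intro h
        have hub : 0 < M.mult u b := by rw [← h, hms]; exact (hNBmem b c).mp hcmem.1
        rcases hNu b hub with h' | h'
        · exact hbuv.2 h'
        · exact hxb.ne (by rw [h'])
      have hcv : c ≠ v := by
        intro h
        have hvb : 0 < M.mult v b := by rw [← h, hms]; exact (hNBmem b c).mp hcmem.1
        rcases hNv b hvb with h' | h'
        · exact hbuv.1 h'
        · exact hyb.ne (by rw [h'])
      have hc3b : ({x, y, c} : Finset W).card = 3 := by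
        rw [Finset.card_insert_of_notMem (by simp [hxy, Ne.symm hcx]),
          Finset.card_insert_of_notMem (by simp [Ne.symm hcy]), Finset.card_singleton]
      have hNb : NB b = {x, y, c} := by
        refine (Finset.eq_of_subset_of_card_le ?_ ?_).symm
        · intro z hz
          rw [Finset.mem_insert, Finset.mem_insert, Finset.mem_singleton] at hz
          rcases hz with h | h | h
          · rw [h]; exact hsubb (by simp)
          · rw [h]; exact hsubb (by simp)
          · rw [h]; exact hcmem.1
        · rw [hNB3 b hbuv.1 hbuv.2, hc3b]
      have hbc1 : M.mult b c = 1 := by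
        have ha := (hNBmem b c).mp hcmem.1
        have hb := hle1 b c (Or.inl ⟨hbuv.1, hbuv.2⟩)
        omega
      have hreach := hbridge_reach b c hbc1
      have hcl : ∀ a' b' : W, a' ∈ ({u, v, x, y, b} : Set W) →
          (M.toSimple \ SimpleGraph.fromEdgeSet {s(b, c)}).Adj a' b' →
          b' ∈ ({u, v, x, y, b} : Set W) := by
        intro a' b' ha' hab'
        obtain ⟨hadj, hnee⟩ := hGsub b c a' b' hab'
        simp only [Set.mem_insert_iff, Set.mem_singleton_iff] at ha' ⊢
        rcases ha' with h | h | h | h | h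
        · rw [h] at hadj
          rcases hNu b' hadj.2 with h' | h' <;> tauto
        · rw [h] at hadj
          rcases hNv b' hadj.2 with h' | h' <;> tauto
        · rw [h] at hadj
          have hb : b' ∈ NB x := (hNBmem x b').mpr hadj.2
          rw [hNx] at hb
          simp only [Finset.mem_insert, Finset.mem_singleton] at hb
          tauto
        · rw [h] at hadj
          have hb : b' ∈ NB y := (hNBmem y b').mpr hadj.2
          rw [hNy] at hb
          simp only [Finset.mem_insert, Finset.mem_singleton] at hb
          tauto
        · rw [h] at hadj hnee
          have hb : b' ∈ NB b := (hNBmem b b').mpr hadj.2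
          rw [hNb] at hb
          simp only [Finset.mem_insert, Finset.mem_singleton] at hb
          rcases hb with h' | h' | h'
          · tauto
          · tauto
          · exact absurd (by rw [h']) hnee
      have hfin := reach_closed hcl hreach (by simp)
      simp only [Set.mem_insert_iff, Set.mem_singleton_iff] at hfin
      rcases hfin with h | h | h | h | h
      · exact hcu h
      · exact hcv h
      · exact hcx h
      · exact hcy h
      · exact hcb h
    rw [hTmem] at hy
    rcases hy with h | h | h
    · exact hyx h
    · exact aux (mb x) (by rw [h]; exact hadj1 x hxu hxv) (hadj2 x hxu hxv)
        (by rw [h]; exact hadj3 x hxu hxv)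
    · exact aux (ma x) (by rw [h]; exact hadj2 x hxu hxv) (hadj1 x hxu hxv)
        (by rw [h]; exact (hadj3 x hxu hxv).symm)
  -- the set of triangles
  set WP : Finset W := Finset.univ.filter (fun w => w ≠ u ∧ w ≠ v) with hWPdef
  have hWPmem : ∀ w : W, w ∈ WP ↔ w ≠ u ∧ w ≠ v := by
    intro w; rw [hWPdef]; simp
  set TT : Finset (Finset W) := WP.image TriF with hTTdef
  have hTTmem : ∀ t, t ∈ TT ↔ ∃ w, (w ≠ u ∧ w ≠ v) ∧ TriF w = t := by
    intro t
    rw [hTTdef]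
    simp only [Finset.mem_image]
    constructor
    · rintro ⟨w, hw, ht⟩
      exact ⟨w, (hWPmem w).mp hw, ht⟩
    · rintro ⟨w, hw, ht⟩
      exact ⟨w, (hWPmem w).mpr hw, ht⟩
  have htri_in_TT : ∀ w : W, w ≠ u → w ≠ v → TriF w ∈ TT := by
    intro w h1 h2'
    rw [hTTmem]
    exact ⟨w, ⟨h1, h2'⟩, rfl⟩
  have hT_elem : ∀ t ∈ TT, ∀ z ∈ t, (z ≠ u ∧ z ≠ v) ∧ TriF z = t := by
    intro t ht z hz
    obtain ⟨w, hw, rfl⟩ := (hTTmem t).mp ht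
    exact ⟨htri_uv w hw.1 hw.2 z hz, htri_eq w hw.1 hw.2 z hz⟩
  set k := TT.card with hkdef
  have hWPcard : WP.card + 2 = Fintype.card W := by
    have hWPeq : WP = Finset.univ \ {u, v} := by
      apply Finset.ext
      intro w
      rw [hWPmem, Finset.mem_sdiff, Finset.mem_insert, Finset.mem_singleton]
      simp [not_or]
    have hc2 : ({u, v} : Finset W).card = 2 := Finset.card_pair huv
    have hle2 : ({u, v} : Finset W).card ≤ Finset.univ.card :=
      Finset.card_le_card (Finset.subset_univ _)
    rw [hWPeq, Finset.card_sdiff_of_subset (Finset.subset_univ _), hc2, Finset.card_univ]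
    rw [hc2, Finset.card_univ] at hle2
    omega
  have hbiU : TT.biUnion (fun t => t) = WP := by
    apply Finset.ext
    intro z
    rw [Finset.mem_biUnion]
    constructor
    · rintro ⟨t, ht, hz⟩
      rw [hWPmem]
      exact (hT_elem t ht z hz).1
    · intro hz
      rw [hWPmem] at hz
      exact ⟨TriF z, htri_in_TT z hz.1 hz.2, htriw z⟩
  have hdisj : ∀ t1 ∈ TT, ∀ t2 ∈ TT, t1 ≠ t2 → Disjoint t1 t2 := by
    intro t1 ht1 t2 ht2 hne
    rw [Finset.disjoint_left]
    intro z hz1 hz2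
    have e1 := (hT_elem t1 ht1 z hz1).2
    have e2 := (hT_elem t2 ht2 z hz2).2
    rw [← e1, ← e2] at hne
    exact hne rfl
  have hWP3k : WP.card = 3 * k := by
    have hcc : ∀ t ∈ TT, (t : Finset W).card = 3 := by
      intro t ht
      obtain ⟨w, hw, rfl⟩ := (hTTmem t).mp ht
      exact htri_card w hw.1 hw.2
    have hbc := Finset.card_biUnion (s := TT) (t := fun t => t) hdisj
    rw [← hbiU, hbc, Finset.sum_congr rfl hcc, Finset.sum_const, smul_eq_mul, hkdef]
    ring
  have hcardW : Fintype.card W = 3 * k + 2 := by omega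
  -- parity
  haveI : DecidableRel M.toSimple.Adj := fun a b => Classical.dec _
  have hpt : ∀ w z : W, M.mult w z = (if M.toSimple.Adj w z then 1 else 0) +
      ((if w = u ∧ z = v then 1 else 0) + (if w = v ∧ z = u then 1 else 0)) := by
    intro w z
    by_cases hA : w = u ∧ z = v
    · rw [hA.1, hA.2]
      have hadj : M.toSimple.Adj u v := ⟨huv, by rw [h2]; norm_num⟩
      rw [if_pos hadj, if_pos ⟨rfl, rfl⟩, if_neg (by rintro ⟨hh, -⟩; exact huv hh), h2]
    · by_cases hB : w = v ∧ z = u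
      · rw [hB.1, hB.2]
        have hm2 : M.mult v u = 2 := by rw [hms]; exact h2
        have hadj : M.toSimple.Adj v u := ⟨Ne.symm huv, by rw [hm2]; norm_num⟩
        rw [if_pos hadj, if_neg (by rintro ⟨hh, -⟩; exact huv hh.symm), if_pos ⟨rfl, rfl⟩, hm2]
      · have hle : M.mult w z ≤ 1 := by
          by_contra hc
          have hm2 : M.mult w z = 2 := le_antisymm (hmax w z) (by omega)
          rcases huniq w z hm2 with h | h
          · exact hA h
          · exact hB h
        rw [if_neg hA, if_neg hB]
        by_cases hz : 0 < M.mult w z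
        · have hne : w ≠ z := by
            intro h; rw [h, M.loopless] at hz; omega
          rw [if_pos ⟨hne, hz⟩]
          omega
        · rw [if_neg (fun h => hz h.2)]
          omega
  have hdeg_eq : ∀ w : W, (∑ z : W, if M.toSimple.Adj w z then 1 else 0) =
      M.toSimple.degree w := by
    intro w
    rw [show M.toSimple.degree w = (Finset.univ.filter (fun z => M.toSimple.Adj w z)).card by
      rw [← SimpleGraph.neighborFinset_eq_filter]; rfl]
    rw [Finset.card_filter]
  have hsum_split : 3 * Fintype.card W = 2 * M.toSimple.edgeFinset.card + 2 := by
    have lhs : ∑ w : W, ∑ z : W, M.mult w z = 3 * Fintype.card W := by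
      rw [Finset.sum_congr rfl (fun w _ => hsum w), Finset.sum_const, Finset.card_univ,
        smul_eq_mul]
      ring
    have rhs : ∑ w : W, ∑ z : W, M.mult w z = (∑ w : W, M.toSimple.degree w) + (1 + 1) := by
      have e1 : ∀ w : W, ∑ z : W, M.mult w z = M.toSimple.degree w +
          ((if w = u then 1 else 0) + (if w = v then 1 else 0)) := by
        intro w
        have su : ∑ z : W, (if w = u ∧ z = v then (1 : ℕ) else 0) =
            (if w = u then 1 else 0) := by
          by_cases hw : w = u
          · simp only [hw, true_and, if_pos rfl]
            rw [Finset.sum_ite_eq' Finset.univ v (fun _ => (1 : ℕ))]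
            simp
          · simp [hw]
        have sv : ∑ z : W, (if w = v ∧ z = u then (1 : ℕ) else 0) =
            (if w = v then 1 else 0) := by
          by_cases hw : w = v
          · simp only [hw, true_and, if_pos rfl]
            rw [Finset.sum_ite_eq' Finset.univ u (fun _ => (1 : ℕ))]
            simp
          · simp [hw]
        calc ∑ z : W, M.mult w z
            = ∑ z : W, ((if M.toSimple.Adj w z then 1 else 0) +
              ((if w = u ∧ z = v then 1 else 0) + (if w = v ∧ z = u then 1 else 0))) :=
              Finset.sum_congr rfl (fun z _ => hpt w z)
          _ = (∑ z : W, if M.toSimple.Adj w z then 1 else 0) +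
              ((∑ z : W, if w = u ∧ z = v then 1 else 0) +
               (∑ z : W, if w = v ∧ z = u then 1 else 0)) := by
              rw [Finset.sum_add_distrib, Finset.sum_add_distrib]
          _ = M.toSimple.degree w + ((if w = u then 1 else 0) + (if w = v then 1 else 0)) := by
              rw [hdeg_eq, su, sv]
      calc ∑ w : W, ∑ z : W, M.mult w z
          = ∑ w : W, (M.toSimple.degree w +
            ((if w = u then 1 else 0) + (if w = v then 1 else 0))) :=
            Finset.sum_congr rfl (fun w _ => e1 w)
        _ = (∑ w : W, M.toSimple.degree w) +
            ((∑ w : W, if w = u then 1 else 0) + (∑ w : W, if w = v then 1 else 0)) := by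
            rw [Finset.sum_add_distrib, Finset.sum_add_distrib]
        _ = (∑ w : W, M.toSimple.degree w) + (1 + 1) := by
            rw [Finset.sum_ite_eq' Finset.univ u (fun _ => (1 : ℕ)),
              Finset.sum_ite_eq' Finset.univ v (fun _ => (1 : ℕ))]
            simp
    have hhs := SimpleGraph.sum_degrees_eq_twice_card_edges M.toSimple
    omega
  have hkeven : k % 2 = 0 := by omega
  -- observation lemmas
  have hseed : ∀ (S : Finset W) (p : W), p ∈ S → p ≠ u → p ≠ v →
      ∀ z ∈ TriF p, MObserved M ↑S z := by
    intro S p hp h1 h2' z hz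
    by_cases hzp : z = p
    · rw [hzp]
      exact MObserved.mem p (by exact_mod_cast hp)
    · exact MObserved.dom p z (by exact_mod_cast hp)
        (by rw [hmult_in_tri p h1 h2' z hz hzp]; norm_num)
  have hsend : ∀ (S : Finset W) (p : W), p ≠ u → p ≠ v →
      (∀ z ∈ TriF p, MObserved M ↑S z) → MObserved M ↑S (ex p) := by
    intro S p h1 h2' hobs
    apply MObserved.prop p (ex p) (hobs p (htriw p)) (hmult_ex p h1 h2')
    intro w' hw' hne
    rcases hexchar p h1 h2' w' hw' with h | h | h
    · exact hobs w' (by rw [hTmem]; right; left; exact h)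
    · exact hobs w' (by rw [hTmem]; right; right; exact h)
    · exact absurd h hne
  have hignite : ∀ (S : Finset W) (p1 p2 : W), p1 ≠ u → p1 ≠ v →
      p2 ∈ TriF p1 → p2 ≠ p1 → MObserved M ↑S p1 → MObserved M ↑S (ex p1) →
      MObserved M ↑S p2 → ∀ z ∈ TriF p1, MObserved M ↑S z := by
    intro S p1 p2 h1 h2' hp2t hp2ne ho1 hoe ho2 z hz
    by_cases hz1 : z = p1
    · rw [hz1]; exact ho1
    · by_cases hz2 : z = p2
      · rw [hz2]; exact ho2
      · apply MObserved.prop p1 z ho1 (hmult_in_tri p1 h1 h2' z hz hz1)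
        intro w' hw' hnez
        rw [hTmem] at hp2t hz
        rcases hexchar p1 h1 h2' w' hw' with h | h | h
        · rcases hp2t with h' | h' | h'
          · exact absurd h' hp2ne
          · rw [h, ← h']; exact ho2
          · rcases hz with h'' | h'' | h''
            · exact absurd h'' hz1
            · exact absurd (h.trans h''.symm) hnez
            · exact absurd (h''.trans h'.symm) hz2
        · rcases hp2t with h' | h' | h'
          · exact absurd h' hp2ne
          · rcases hz with h'' | h'' | h''
            · exact absurd h'' hz1
            · exact absurd (h''.trans h'.symm) hz2
            · exact absurd (h.trans h''.symm) hnez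
          · rw [h, ← h']; exact ho2
        · rw [h]; exact hoe
  -- crossing lemma
  have hcross : ∀ A B : Finset W, (∀ w ∈ A, w ≠ u ∧ w ≠ v) → (∀ w ∈ B, w ≠ u ∧ w ≠ v) →
      (∀ w : W, w ≠ u → w ≠ v → w ∈ A ∨ w ∈ B) → (∀ w, w ∈ A → w ∈ B → False) →
      A.Nonempty → B.Nonempty → ∃ p q, p ∈ A ∧ q ∈ B ∧ 0 < M.mult p q := by
    intro A B hAuv hBuv hcover hAB hAne hBne
    by_contra hno'
    push_neg at hno'
    have hno : ∀ p q : W, p ∈ A → q ∈ B → M.mult p q = 0 := by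
      intro p q hp hq
      have := hno' p q hp hq
      omega
    have hxAB := hcover x hxu hxv
    have hyAB := hcover y hyu hyv
    rcases hxAB with hxA | hxB
    · rcases hyAB with hyA | hyB
      · obtain ⟨b0, hb0⟩ := hBne
        have hcl : ∀ a' b' : W, a' ∈ (↑A ∪ {u, v} : Set W) → M.toSimple.Adj a' b' →
            b' ∈ (↑A ∪ {u, v} : Set W) := by
          intro a' b' ha' hadj
          simp only [Set.mem_union, Finset.mem_coe, Set.mem_insert_iff,
            Set.mem_singleton_iff] at ha' ⊢
          rcases ha' with ha' | ha' | ha'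
          · by_cases hbu : b' = u
            · tauto
            · by_cases hbv : b' = v
              · tauto
              · rcases hcover b' hbu hbv with h | h
                · tauto
                · exact absurd (hno a' b' ha' h) (by have := hadj.2; omega)
          · rw [ha'] at hadj
            rcases hNu b' hadj.2 with h | h
            · tauto
            · exact Or.inl (by rw [h]; exact hxA)
          · rw [ha'] at hadj
            rcases hNv b' hadj.2 with h | h
            · tauto
            · exact Or.inl (by rw [h]; exact hyA)
        have hfin := reach_closed hcl (hconn.preconnected x b0)
          (Set.mem_union_left _ (Finset.mem_coe.mpr hxA))
        simp only [Set.mem_union, Finset.mem_coe, Set.mem_insert_iff,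
          Set.mem_singleton_iff] at hfin
        rcases hfin with h | h | h
        · exact hAB b0 h hb0
        · exact (hBuv b0 hb0).1 h
        · exact (hBuv b0 hb0).2 h
      · have hreach := hbridge_reach u x hux
        have hcl : ∀ a' b' : W, a' ∈ (↑B ∪ {u, v} : Set W) →
            (M.toSimple \ SimpleGraph.fromEdgeSet {s(u, x)}).Adj a' b' →
            b' ∈ (↑B ∪ {u, v} : Set W) := by
          intro a' b' ha' hab'
          obtain ⟨hadj, hnee⟩ := hGsub u x a' b' hab'
          simp only [Set.mem_union, Finset.mem_coe, Set.mem_insert_iff,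
            Set.mem_singleton_iff] at ha' ⊢
          rcases ha' with ha' | ha' | ha'
          · by_cases hbu : b' = u
            · tauto
            · by_cases hbv : b' = v
              · tauto
              · rcases hcover b' hbu hbv with h | h
                · exact absurd (hno b' a' h ha') (by rw [hms]; have := hadj.2; omega)
                · tauto
          · rw [ha'] at hadj hnee
            rcases hNu b' hadj.2 with h | h
            · tauto
            · exact absurd (by rw [h]) hnee
          · rw [ha'] at hadj
            rcases hNv b' hadj.2 with h | h
            · tauto
            · exact Or.inl (by rw [h]; exact hyB)
        have hfin := reach_closed hcl hreach (by right; left; rfl)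
        simp only [Set.mem_union, Finset.mem_coe, Set.mem_insert_iff,
          Set.mem_singleton_iff] at hfin
        rcases hfin with h | h | h
        · exact hAB x hxA h
        · exact hxu h
        · exact hxv h
    · rcases hyAB with hyA | hyB
      · have hreach := hbridge_reach v y hvy
        have hcl : ∀ a' b' : W, a' ∈ (↑B ∪ {u, v} : Set W) →
            (M.toSimple \ SimpleGraph.fromEdgeSet {s(v, y)}).Adj a' b' →
            b' ∈ (↑B ∪ {u, v} : Set W) := by
          intro a' b' ha' hab'
          obtain ⟨hadj, hnee⟩ := hGsub v y a' b' hab'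
          simp only [Set.mem_union, Finset.mem_coe, Set.mem_insert_iff,
            Set.mem_singleton_iff] at ha' ⊢
          rcases ha' with ha' | ha' | ha'
          · by_cases hbu : b' = u
            · tauto
            · by_cases hbv : b' = v
              · tauto
              · rcases hcover b' hbu hbv with h | h
                · exact absurd (hno b' a' h ha') (by rw [hms]; have := hadj.2; omega)
                · tauto
          · rw [ha'] at hadj
            rcases hNu b' hadj.2 with h | h
            · tauto
            · exact Or.inl (by rw [h]; exact hxB)
          · rw [ha'] at hadj hnee
            rcases hNv b' hadj.2 with h | h
            · tauto
            · exact absurd (by rw [h]) hnee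
        have hfin := reach_closed hcl hreach (by right; right; rfl)
        simp only [Set.mem_union, Finset.mem_coe, Set.mem_insert_iff,
          Set.mem_singleton_iff] at hfin
        rcases hfin with h | h | h
        · exact hAB y hyA h
        · exact hyu h
        · exact hyv h
      · obtain ⟨a0, ha0⟩ := hAne
        have hcl : ∀ a' b' : W, a' ∈ (↑B ∪ {u, v} : Set W) → M.toSimple.Adj a' b' →
            b' ∈ (↑B ∪ {u, v} : Set W) := by
          intro a' b' ha' hadj
          simp only [Set.mem_union, Finset.mem_coe, Set.mem_insert_iff,
            Set.mem_singleton_iff] at ha' ⊢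
          rcases ha' with ha' | ha' | ha'
          · by_cases hbu : b' = u
            · tauto
            · by_cases hbv : b' = v
              · tauto
              · rcases hcover b' hbu hbv with h | h
                · exact absurd (hno b' a' h ha') (by rw [hms]; have := hadj.2; omega)
                · tauto
          · rw [ha'] at hadj
            rcases hNu b' hadj.2 with h | h
            · tauto
            · exact Or.inl (by rw [h]; exact hxB)
          · rw [ha'] at hadj
            rcases hNv b' hadj.2 with h | h
            · tauto
            · exact Or.inl (by rw [h]; exact hyB)
        have hfin := reach_closed hcl (hconn.preconnected x a0)
          (Set.mem_union_left _ (Finset.mem_coe.mpr hxB))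
        simp only [Set.mem_union, Finset.mem_coe, Set.mem_insert_iff,
          Set.mem_singleton_iff] at hfin
        rcases hfin with h | h | h
        · exact hAB a0 ha0 h
        · exact (hAuv a0 ha0).1 h
        · exact (hAuv a0 ha0).2 h
  -- main percolation induction
  have hmain : ∀ m (U : Finset (Finset W)), U ⊆ TT → U.card = m → (TT \ U).Nonempty →
      ∃ A : Finset W, A.card ≤ m / 2 ∧ (∀ a ∈ A, a ≠ u ∧ a ≠ v) ∧
        ∀ S : Finset W, A ⊆ S →
          (∀ t ∈ TT \ U, ∀ z ∈ t, MObserved M ↑S z) →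
          ∀ t ∈ TT, ∀ z ∈ t, MObserved M ↑S z := by
    intro m
    induction m using Nat.strong_induction_on with
    | _ m ih =>
    intro U hUT hUcard hFne
    rcases Nat.eq_zero_or_pos m with rfl | hm
    · have hU0 : U = ∅ := Finset.card_eq_zero.mp hUcard
      subst hU0
      refine ⟨∅, by simp, by simp, ?_⟩
      intro S _ hF t ht
      exact hF t (by rwa [Finset.sdiff_empty])
    · have hUne : U.Nonempty := Finset.card_pos.mp (by omega)
      have hgot : ∃ p q : W, p ∈ (TT \ U).biUnion id ∧ q ∈ U.biUnion id ∧ 0 < M.mult p q := by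
        apply hcross
        · intro w hw
          obtain ⟨t, ht, hwt⟩ := Finset.mem_biUnion.mp hw
          exact (hT_elem t (Finset.mem_sdiff.mp ht).1 w hwt).1
        · intro w hw
          obtain ⟨t, ht, hwt⟩ := Finset.mem_biUnion.mp hw
          exact (hT_elem t (hUT ht) w hwt).1
        · intro w h1 h2'
          by_cases hin : TriF w ∈ U
          · right; exact Finset.mem_biUnion.mpr ⟨TriF w, hin, htriw w⟩
          · left
            exact Finset.mem_biUnion.mpr ⟨TriF w, Finset.mem_sdiff.mpr
              ⟨htri_in_TT w h1 h2', hin⟩, htriw w⟩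
        · intro w hw1 hw2
          obtain ⟨t1, ht1, hwt1⟩ := Finset.mem_biUnion.mp hw1
          obtain ⟨t2, ht2, hwt2⟩ := Finset.mem_biUnion.mp hw2
          have e1 := (hT_elem t1 (Finset.mem_sdiff.mp ht1).1 w hwt1).2
          have e2 := (hT_elem t2 (hUT ht2) w hwt2).2
          exact (Finset.mem_sdiff.mp ht1).2 (by rw [← e1, e2]; exact ht2)
        · obtain ⟨t, ht⟩ := hFne
          obtain ⟨w, hw, rfl⟩ := (hTTmem t).mp (Finset.mem_sdiff.mp ht).1
          exact ⟨w, Finset.mem_biUnion.mpr ⟨TriF w, ht, htriw w⟩⟩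
        · obtain ⟨t, ht⟩ := hUne
          obtain ⟨w, hw, rfl⟩ := (hTTmem t).mp (hUT ht)
          exact ⟨w, Finset.mem_biUnion.mpr ⟨TriF w, ht, htriw w⟩⟩
      obtain ⟨p, q, hpF, hqU, hpq⟩ := hgot
      obtain ⟨tp, htpF, hptp⟩ := Finset.mem_biUnion.mp hpF
      obtain ⟨tq0, htq0U, hqtq0⟩ := Finset.mem_biUnion.mp hqU
      have htpTT := (Finset.mem_sdiff.mp htpF).1
      have hp_elem := hT_elem tp htpTT p hptp
      have hq_elem := hT_elem tq0 (hUT htq0U) q hqtq0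
      have hpuv := hp_elem.1
      have hquv := hq_elem.1
      have htp_eq : TriF p = tp := hp_elem.2
      have htq_eq : TriF q = tq0 := hq_elem.2
      have htqU : TriF q ∈ U := by rw [htq_eq]; exact htq0U
      have htpF' : TriF p ∈ TT \ U := by rw [htp_eq]; exact htpF
      have hp_not : p ∉ TriF q := by
        intro h
        have hpp := htri_eq q hquv.1 hquv.2 p h
        rw [htp_eq] at hpp
        exact (Finset.mem_sdiff.mp htpF).2 (by rw [hpp]; exact htqU)
      have hq_not : q ∉ TriF p := by
        intro h
        have hqq := htri_eq p hpuv.1 hpuv.2 q h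
        rw [htq_eq] at hqq
        exact (Finset.mem_sdiff.mp htpF).2 (by rw [← htp_eq, ← hqq]; exact htq0U)
      have hp_ext : p = ex q := horient q p hquv.1 hquv.2 (by rw [hms]; omega) hp_not
      have hq_ext : q = ex p := horient p q hpuv.1 hpuv.2 hpq hq_not
      have hobs_q : ∀ S : Finset W, (∀ t ∈ TT \ U, ∀ z ∈ t, MObserved M ↑S z) →
          MObserved M ↑S q ∧ MObserved M ↑S (ex q) := by
        intro S hF
        constructor
        · rw [hq_ext]
          exact hsend S p hpuv.1 hpuv.2 (hF (TriF p) htpF')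
        · rw [← hp_ext]
          exact hF (TriF p) htpF' p (htriw p)
      have step1 : ∀ w2 : W, w2 ∈ TriF q → w2 ≠ q → ex w2 ∈ (TT \ U).biUnion id →
          ∃ A : Finset W, A.card ≤ m / 2 ∧ (∀ a ∈ A, a ≠ u ∧ a ≠ v) ∧
            ∀ S : Finset W, A ⊆ S →
              (∀ t ∈ TT \ U, ∀ z ∈ t, MObserved M ↑S z) →
              ∀ t ∈ TT, ∀ z ∈ t, MObserved M ↑S z := by
        intro w2 hw2t hw2q hw2F
        have hw2uv := htri_uv q hquv.1 hquv.2 w2 hw2t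
        obtain ⟨A, hAcard, hAuv, hAperc⟩ := ih (m - 1) (by omega) (U.erase (TriF q))
          (Finset.Subset.trans (Finset.erase_subset _ _) hUT)
          (by rw [Finset.card_erase_of_mem htqU]; omega)
          (by
            obtain ⟨t, ht⟩ := hFne
            exact ⟨t, Finset.mem_sdiff.mpr ⟨(Finset.mem_sdiff.mp ht).1,
              fun hc => (Finset.mem_sdiff.mp ht).2 (Finset.mem_of_mem_erase hc)⟩⟩)
        refine ⟨A, le_trans hAcard (Nat.div_le_div_right (by omega)), hAuv, ?_⟩
        intro S hAS hF
        obtain ⟨ho_q, ho_exq⟩ := hobs_q S hF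
        obtain ⟨t2, ht2F, he2t2⟩ := Finset.mem_biUnion.mp hw2F
        have ht2TT := (Finset.mem_sdiff.mp ht2F).1
        have he2 := hT_elem t2 ht2TT (ex w2) he2t2
        have hw2_is_ext : w2 = ex (ex w2) := by
          apply horient (ex w2) w2 he2.1.1 he2.1.2
          · rw [hms]
            have := hexpos w2 hw2uv.1 hw2uv.2
            omega
          · intro hc
            have hteq := htri_eq (ex w2) he2.1.1 he2.1.2 w2 hc
            have hw2tri : TriF w2 = TriF q := htri_eq q hquv.1 hquv.2 w2 hw2t
            rw [hw2tri, he2.2] at hteq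
            exact (Finset.mem_sdiff.mp ht2F).2 (by rw [← hteq]; exact htqU)
        have ho_w2 : MObserved M ↑S w2 := by
          rw [hw2_is_ext]
          exact hsend S (ex w2) he2.1.1 he2.1.2 (by rw [he2.2]; exact hF t2 ht2F)
        have hq_full : ∀ z ∈ TriF q, MObserved M ↑S z :=
          hignite S q w2 hquv.1 hquv.2 hw2t hw2q ho_q ho_exq ho_w2
        apply hAperc S hAS
        intro t ht
        rw [Finset.mem_sdiff] at ht
        by_cases htq : t = TriF q
        · rw [htq]; exact hq_full
        · apply hF t
          rw [Finset.mem_sdiff]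
          exact ⟨ht.1, fun hc => ht.2 (Finset.mem_erase.mpr ⟨htq, hc⟩)⟩
      have step2 : ∀ w2 : W, w2 ∈ TriF q → w2 ≠ q → ex w2 ∈ U.biUnion id →
          ∃ A : Finset W, A.card ≤ m / 2 ∧ (∀ a ∈ A, a ≠ u ∧ a ≠ v) ∧
            ∀ S : Finset W, A ⊆ S →
              (∀ t ∈ TT \ U, ∀ z ∈ t, MObserved M ↑S z) →
              ∀ t ∈ TT, ∀ z ∈ t, MObserved M ↑S z := by
        intro w2 hw2t hw2q hw2B
        have hw2uv := htri_uv q hquv.1 hquv.2 w2 hw2t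
        have hw2tri : TriF w2 = TriF q := htri_eq q hquv.1 hquv.2 w2 hw2t
        obtain ⟨t2, ht2U, he2t2⟩ := Finset.mem_biUnion.mp hw2B
        have he2 := hT_elem t2 (hUT ht2U) (ex w2) he2t2
        have hte_eq : TriF (ex w2) = t2 := he2.2
        have he_not_q : ex w2 ∉ TriF q := by
          rw [← hw2tri]
          exact hext_not_tri w2 hw2uv.1 hw2uv.2
        have hte_ne : t2 ≠ TriF q := by
          intro hc
          rw [hc] at he2t2
          exact he_not_q he2t2
        have ht2U' : t2 ∈ U.erase (TriF q) := Finset.mem_erase.mpr ⟨hte_ne, ht2U⟩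
        have hm2 : 2 ≤ m := by
          have hsub : ({TriF q, t2} : Finset (Finset W)) ⊆ U := by
            intro t' ht'
            rw [Finset.mem_insert, Finset.mem_singleton] at ht'
            rcases ht' with rfl | rfl
            · exact htqU
            · exact ht2U
          have hcle := Finset.card_le_card hsub
          rw [Finset.card_pair (Ne.symm hte_ne)] at hcle
          omega
        obtain ⟨A, hAcard, hAuv, hAperc⟩ := ih (m - 2) (by omega)
          ((U.erase (TriF q)).erase t2)
          (Finset.Subset.trans (Finset.erase_subset _ _)
            (Finset.Subset.trans (Finset.erase_subset _ _) hUT))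
          (by rw [Finset.card_erase_of_mem ht2U', Finset.card_erase_of_mem htqU]; omega)
          (by
            obtain ⟨t, ht⟩ := hFne
            exact ⟨t, Finset.mem_sdiff.mpr ⟨(Finset.mem_sdiff.mp ht).1,
              fun hc => (Finset.mem_sdiff.mp ht).2
                (Finset.mem_of_mem_erase (Finset.mem_of_mem_erase hc))⟩⟩)
        refine ⟨insert (ex w2) A, ?_, ?_, ?_⟩
        · have := Finset.card_insert_le (ex w2) A
          omega
        · intro a ha
          rcases Finset.mem_insert.mp ha with h | h
          · rw [h]; exact he2.1
          · exact hAuv a h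
        · intro S hAS hF
          have heS : ex w2 ∈ S := hAS (Finset.mem_insert_self _ _)
          have ht2_full : ∀ z ∈ TriF (ex w2), MObserved M ↑S z :=
            hseed S (ex w2) heS he2.1.1 he2.1.2
          obtain ⟨ho_q, ho_exq⟩ := hobs_q S hF
          have hw2_is_ext : w2 = ex (ex w2) := by
            apply horient (ex w2) w2 he2.1.1 he2.1.2
            · rw [hms]
              have := hexpos w2 hw2uv.1 hw2uv.2
              omega
            · intro hc
              have hteq := htri_eq (ex w2) he2.1.1 he2.1.2 w2 hc
              rw [hw2tri, hte_eq] at hteq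
              exact hte_ne hteq.symm
          have ho_w2 : MObserved M ↑S w2 := by
            rw [hw2_is_ext]
            exact hsend S (ex w2) he2.1.1 he2.1.2 ht2_full
          have hq_full : ∀ z ∈ TriF q, MObserved M ↑S z :=
            hignite S q w2 hquv.1 hquv.2 hw2t hw2q ho_q ho_exq ho_w2
          apply hAperc S (Finset.Subset.trans (Finset.subset_insert _ _) hAS)
          intro t ht
          rw [Finset.mem_sdiff] at ht
          by_cases htq : t = TriF q
          · rw [htq]; exact hq_full
          · by_cases htt2 : t = t2
            · rw [htt2, ← hte_eq]
              exact ht2_full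
            · apply hF t
              rw [Finset.mem_sdiff]
              exact ⟨ht.1, fun hc => ht.2
                (Finset.mem_erase.mpr ⟨htt2, Finset.mem_erase.mpr ⟨htq, hc⟩⟩)⟩
      have hclassify : ∀ w2 : W, w2 ∈ TriF q → w2 ≠ q →
          ex w2 ∈ (TT \ U).biUnion id ∨ ex w2 ∈ U.biUnion id ∨ (w2 = x ∨ w2 = y) := by
        intro w2 hw2t hw2q
        have hw2uv := htri_uv q hquv.1 hquv.2 w2 hw2t
        by_cases heu : ex w2 = u
        · right; right; left
          have hpos : 0 < M.mult u w2 := by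
            rw [← heu, hms]
            have := hexpos w2 hw2uv.1 hw2uv.2
            omega
          rcases hNu w2 hpos with h | h
          · exact absurd h hw2uv.2
          · exact h
        · by_cases hev : ex w2 = v
          · right; right; right
            have hpos : 0 < M.mult v w2 := by
              rw [← hev, hms]
              have := hexpos w2 hw2uv.1 hw2uv.2
              omega
            rcases hNv w2 hpos with h | h
            · exact absurd h hw2uv.1
            · exact h
          · by_cases hein : TriF (ex w2) ∈ U
            · right; left
              exact Finset.mem_biUnion.mpr ⟨TriF (ex w2), hein, htriw (ex w2)⟩
            · left
              exact Finset.mem_biUnion.mpr ⟨TriF (ex w2), Finset.mem_sdiff.mpr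
                ⟨htri_in_TT (ex w2) heu hev, hein⟩, htriw (ex w2)⟩
      have hma_tri : ma q ∈ TriF q := by rw [hTmem]; right; left; rfl
      have hmb_tri : mb q ∈ TriF q := by rw [hTmem]; right; right; rfl
      have hma_ne : ma q ≠ q := (hadj1 q hquv.1 hquv.2).ne'
      have hmb_ne : mb q ≠ q := (hadj2 q hquv.1 hquv.2).ne'
      have hnotxy : ¬ ((ma q = x ∨ ma q = y) ∧ (mb q = x ∨ mb q = y)) := by
        rintro ⟨h1 | h1, h2' | h2'⟩
        · exact (hadj3 q hquv.1 hquv.2).ne (h1.trans h2'.symm)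
        · apply hTxTy
          have hx_in : x ∈ TriF q := by rw [← h1]; exact hma_tri
          have hteq := htri_eq q hquv.1 hquv.2 x hx_in
          rw [hteq]
          rw [← h2']
          exact hmb_tri
        · apply hTxTy
          have hx_in : x ∈ TriF q := by rw [← h2']; exact hmb_tri
          have hteq := htri_eq q hquv.1 hquv.2 x hx_in
          rw [hteq]
          rw [← h1]
          exact hma_tri
        · exact (hadj3 q hquv.1 hquv.2).ne (h1.trans h2'.symm)
      rcases hclassify (ma q) hma_tri hma_ne with h | h | hxa
      · exact step1 (ma q) hma_tri hma_ne h
      · exact step2 (ma q) hma_tri hma_ne h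
      · rcases hclassify (mb q) hmb_tri hmb_ne with h' | h' | hxb
        · exact step1 (mb q) hmb_tri hmb_ne h'
        · exact step2 (mb q) hmb_tri hmb_ne h'
        · exact absurd ⟨hxa, hxb⟩ hnotxy
  -- assembly
  have hTx : TriF x ∈ TT := htri_in_TT x hxu hxv
  have hk1 : 1 ≤ k := by
    have := Finset.card_pos.mpr ⟨TriF x, hTx⟩
    omega
  obtain ⟨A, hAcard, hAuv, hAperc⟩ := hmain (k - 1) (TT.erase (TriF x))
    (Finset.erase_subset _ _)
    (by rw [Finset.card_erase_of_mem hTx])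
    ⟨TriF x, Finset.mem_sdiff.mpr ⟨hTx, Finset.notMem_erase _ _⟩⟩
  have hallT : ∀ t ∈ TT, ∀ z ∈ t, MObserved M ↑(insert x A) z := by
    apply hAperc (insert x A) (Finset.subset_insert _ _)
    intro t ht
    rw [Finset.mem_sdiff] at ht
    have ht_eq : t = TriF x := by
      by_contra hne
      exact ht.2 (Finset.mem_erase.mpr ⟨hne, ht.1⟩)
    rw [ht_eq]
    exact hseed (insert x A) x (Finset.mem_insert_self _ _) hxu hxv
  have hPDS : ∀ z : W, MObserved M ↑(insert x A) z := by
    intro z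
    by_cases hzu : z = u
    · rw [hzu, ← hu_ext]
      exact hsend (insert x A) x hxu hxv (hallT (TriF x) hTx)
    · by_cases hzv : z = v
      · rw [hzv, ← hv_ext]
        exact hsend (insert x A) y hyu hyv (hallT (TriF y) (htri_in_TT y hyu hyv))
      · exact hallT (TriF z) (htri_in_TT z hzu hzv) z (htriw z)
  have hmpd : mpdNum M ≤ (insert x A).card := Nat.sInf_le ⟨insert x A, rfl, hPDS⟩
  have hScard : (insert x A).card ≤ k / 2 := by
    have h1 := Finset.card_insert_le x A
    omega
  obtain ⟨j, hj⟩ : ∃ j, k = 2 * j := ⟨k / 2, by omega⟩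
  have hmpdj : mpdNum M ≤ j := by omega
  have hcast : (Fintype.card W : ℚ) = 6 * j + 2 := by
    rw [hcardW, hj]
    push_cast
    ring
  rw [hcast]
  have hfin : (mpdNum M : ℚ) ≤ j := by exact_mod_cast hmpdj
  linarith

end PaperPD
end

section
/- For any graph G, the number of strong support vertices of G is at most γ_P(G). -/
namespace PaperPD

open SimpleGraph

variable {V : Type} {W : Type}

lemma key {V : Type} (G : SimpleGraph V) (S : Set V) (h : IsPDS G S) (x : V)
    (hx : IsStrongSupport G x) : ∃ y ∈ S, y = x ∨ (IsLeaf G y ∧ G.Adj x y) := by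
  by_contra hc
  push_neg at hc
  obtain ⟨a, b, hab, hxa, hxb, la, lb⟩ := hx
  have main : ∀ v, Observed G S v → v ≠ a ∧ v ≠ b := by
    intro v hv
    induction hv with
    | mem v hvS =>
      constructor
      · rintro rfl; exact (hc v hvS).2 la hxa
      · rintro rfl; exact (hc v hvS).2 lb hxb
    | dom u v huS hadj =>
      constructor
      · rintro rfl
        have hu : u = x := la.unique hadj.symm hxa.symm
        exact (hc u huS).1 hu
      · rintro rfl
        have hu : u = x := lb.unique hadj.symm hxb.symm
        exact (hc u huS).1 hu
    | prop u v hu hadj hall ihu ihall =>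
      constructor
      · rintro rfl
        have hu : u = x := la.unique hadj.symm hxa.symm
        subst hu
        exact (ihall b hxb (Ne.symm hab)).2 rfl
      · rintro rfl
        have hu : u = x := lb.unique hadj.symm hxb.symm
        subst hu
        exact (ihall a hxa hab).1 rfl
  exact (main a (h a)).1 rfl

lemma ss_not_leaf {V : Type} (G : SimpleGraph V) {x : V} (hx : IsStrongSupport G x) :
    ¬ IsLeaf G x := by
  obtain ⟨a, b, hab, hxa, hxb, _, _⟩ := hx
  rintro ⟨u, hu, huniq⟩
  exact hab ((huniq a hxa).trans (huniq b hxb).symm)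

theorem stmt9 {V : Type} [Fintype V] (G : SimpleGraph V) :
    ssCount G ≤ pdNum G := by
  classical
  have hne : {n | ∃ S : Finset V, S.card = n ∧ IsPDS G ↑S}.Nonempty :=
    ⟨Finset.univ.card, Finset.univ, rfl, fun v => Observed.mem v (by simp)⟩
  obtain ⟨S, hScard, hSpds⟩ := Nat.sInf_mem hne
  rw [pdNum, ← hScard]
  have hkey : ∀ x : {v // IsStrongSupport G v}, ∃ y ∈ (S : Set V),
      y = x.1 ∨ (IsLeaf G y ∧ G.Adj x.1 y) := fun x => key G S hSpds x.1 x.2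
  choose f hfS hfspec using hkey
  have hinj : Function.Injective (fun x : {v // IsStrongSupport G v} =>
      (⟨f x, hfS x⟩ : {y // y ∈ (S : Set V)})) := by
    intro x x' hEq
    have hfe : f x = f x' := congrArg Subtype.val hEq
    ext
    rcases hfspec x with h1 | h1 <;> rcases hfspec x' with h2 | h2
    · rw [← h1, ← h2, hfe]
    · exfalso
      exact ss_not_leaf G x.2 (h1 ▸ hfe ▸ h2.1)
    · exfalso
      exact ss_not_leaf G x'.2 (h2 ▸ hfe.symm ▸ h1.1)
    · -- f x leaf adjacent to both x and x'
      have := h1.1.unique h1.2.symm (hfe ▸ h2.2.symm)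
      exact this
  unfold ssCount
  calc Nat.card {v // IsStrongSupport G v}
      ≤ Nat.card {y // y ∈ (S : Set V)} := Nat.card_le_card_of_injective _ hinj
    _ = S.card := by simp [Nat.card_eq_fintype_card]

end PaperPD
end

section
/- For any connected graphs G and H, v_s(G)·v_s(H) ≤ γ_P(G □ H), where v_s denotes the number of strong support vertices. -/
namespace PaperPD

open SimpleGraph

variable {V : Type} {W : Type}

/-- The unique neighbor of a leaf. -/
lemma leaf_nbr {G : SimpleGraph V} {x a : V} (ha : G.Adj x a) (la : IsLeaf G a)
    {g : V} (hg : G.Adj a g) : g = x := by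
  obtain ⟨u, _, hun⟩ := la
  rw [hun g hg, hun x ha.symm]

/-- The vertex together with its adjacent leaves. -/
def ASet (G : SimpleGraph V) (x : V) : Set V := {x} ∪ {a | G.Adj x a ∧ IsLeaf G a}

lemma strong_not_leaf {G : SimpleGraph V} {x : V} (hx : IsStrongSupport G x) :
    ¬ IsLeaf G x := by
  obtain ⟨a, b, hab, hxa, hxb, _, _⟩ := hx
  rintro ⟨u, _, hun⟩
  exact hab ((hun a hxa).trans (hun b hxb).symm)

lemma ASet_eq {G : SimpleGraph V} {x x' : V} (hx : IsStrongSupport G x)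
    (hx' : IsStrongSupport G x') {z : V} (hz : z ∈ ASet G x) (hz' : z ∈ ASet G x') :
    x = x' := by
  rcases hz with hz | ⟨hadj, hleaf⟩ <;> rcases hz' with hz' | ⟨hadj', hleaf'⟩
  · exact hz.symm.trans hz'
  · exact absurd hleaf' (by subst hz; exact strong_not_leaf hx)
  · exact absurd hleaf (by subst hz'; exact strong_not_leaf hx')
  · exact leaf_nbr hadj' hleaf' hadj.symm

lemma mem_ASet_left {G : SimpleGraph V} (x : V) : x ∈ ASet G x := Or.inl rfl

lemma mem_ASet_leaf {G : SimpleGraph V} {x a : V} (h : G.Adj x a) (l : IsLeaf G a) :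
    a ∈ ASet G x := Or.inr ⟨h, l⟩

lemma not_corner {G : SimpleGraph V} {H : SimpleGraph W} {S : Set (V × W)}
    {x a b : V} {y c d : W}
    (hxa : G.Adj x a) (hxb : G.Adj x b) (hab : a ≠ b) (la : IsLeaf G a) (lb : IsLeaf G b)
    (hyc : H.Adj y c) (hyd : H.Adj y d) (hcd : c ≠ d) (lc : IsLeaf H c) (ld : IsLeaf H d)
    (hS : ∀ p ∈ S, ¬ (p.1 ∈ ASet G x ∧ p.2 ∈ ASet H y)) :
    ∀ v, Observed (G.boxProd H) S v →
      ¬ ((v.1 = a ∨ v.1 = b) ∧ (v.2 = c ∨ v.2 = d)) := by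
  intro v hv
  induction hv with
  | mem v hmem =>
    rintro ⟨h1, h2⟩
    refine hS v hmem ⟨?_, ?_⟩
    · rcases h1 with h | h <;> rw [h]
      exacts [mem_ASet_leaf hxa la, mem_ASet_leaf hxb lb]
    · rcases h2 with h | h <;> rw [h]
      exacts [mem_ASet_leaf hyc lc, mem_ASet_leaf hyd ld]
  | dom u v hu hadj =>
    rintro ⟨h1, h2⟩
    refine hS u hu ?_
    rcases SimpleGraph.boxProd_adj.mp hadj with ⟨hA1, hE2⟩ | ⟨hA2, hE1⟩
    · constructor
      · have hux : u.1 = x := by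
          rcases h1 with h | h <;> rw [h] at hA1
          exacts [leaf_nbr hxa la hA1.symm, leaf_nbr hxb lb hA1.symm]
        rw [hux]; exact mem_ASet_left x
      · rw [hE2]
        rcases h2 with h | h <;> rw [h]
        exacts [mem_ASet_leaf hyc lc, mem_ASet_leaf hyd ld]
    · constructor
      · rw [hE1]
        rcases h1 with h | h <;> rw [h]
        exacts [mem_ASet_leaf hxa la, mem_ASet_leaf hxb lb]
      · have huy : u.2 = y := by
          rcases h2 with h | h <;> rw [h] at hA2
          exacts [leaf_nbr hyc lc hA2.symm, leaf_nbr hyd ld hA2.symm]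
        rw [huy]; exact mem_ASet_left y
  | prop u v hu hadj hall ihu ihall =>
    rintro ⟨h1, h2⟩
    rcases SimpleGraph.boxProd_adj.mp hadj with ⟨hA1, hE2⟩ | ⟨hA2, hE1⟩
    · have hux : u.1 = x := by
        rcases h1 with h | h <;> rw [h] at hA1
        exacts [leaf_nbr hxa la hA1.symm, leaf_nbr hxb lb hA1.symm]
      rcases h1 with h | h
      · refine ihall (b, v.2) ?_ ?_ ⟨Or.inr rfl, h2⟩
        · exact SimpleGraph.boxProd_adj.mpr (Or.inl ⟨by rw [hux]; exact hxb, hE2⟩)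
        · intro hw
          apply hab
          rw [← h]
          exact (congrArg Prod.fst hw).symm
      · refine ihall (a, v.2) ?_ ?_ ⟨Or.inl rfl, h2⟩
        · exact SimpleGraph.boxProd_adj.mpr (Or.inl ⟨by rw [hux]; exact hxa, hE2⟩)
        · intro hw
          apply hab
          rw [← h]
          exact congrArg Prod.fst hw
    · have huy : u.2 = y := by
        rcases h2 with h | h <;> rw [h] at hA2
        exacts [leaf_nbr hyc lc hA2.symm, leaf_nbr hyd ld hA2.symm]
      rcases h2 with h | h
      · refine ihall (v.1, d) ?_ ?_ ⟨h1, Or.inr rfl⟩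
        · exact SimpleGraph.boxProd_adj.mpr (Or.inr ⟨by rw [huy]; exact hyd, hE1⟩)
        · intro hw
          apply hcd
          rw [← h]
          exact (congrArg Prod.snd hw).symm
      · refine ihall (v.1, c) ?_ ?_ ⟨h1, Or.inl rfl⟩
        · exact SimpleGraph.boxProd_adj.mpr (Or.inr ⟨by rw [huy]; exact hyc, hE1⟩)
        · intro hw
          apply hcd
          rw [← h]
          exact congrArg Prod.snd hw

theorem stmt10 {V W : Type} [Fintype V] [Fintype W]
    (G : SimpleGraph V) (H : SimpleGraph W)
    (hG : G.Connected) (hH : H.Connected) :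
    ssCount G * ssCount H ≤ pdNum (G.boxProd H) := by
  classical
  -- the defining set of pdNum is nonempty
  have hne : {n | ∃ S : Finset (V × W), S.card = n ∧ IsPDS (G.boxProd H) ↑S}.Nonempty := by
    exact ⟨(Finset.univ : Finset (V × W)).card, Finset.univ, rfl,
      fun v => Observed.mem v (by simp)⟩
  obtain ⟨S, hScard, hSpds⟩ := Nat.sInf_mem hne
  rw [pdNum, ← hScard]
  -- every strong support pair forces a vertex of S in its associated product set
  have hex : ∀ (p : {v // IsStrongSupport G v} × {w // IsStrongSupport H w}),
      ∃ q : V × W, q ∈ S ∧ q.1 ∈ ASet G p.1.1 ∧ q.2 ∈ ASet H p.2.1 := by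
    rintro ⟨⟨x, hx⟩, ⟨y, hy⟩⟩
    by_contra hcon
    push_neg at hcon
    obtain ⟨a, b, hab, hxa, hxb, la, lb⟩ := hx
    obtain ⟨c, d, hcd, hyc, hyd, lc, ld⟩ := hy
    have hS : ∀ p ∈ (↑S : Set (V × W)), ¬ (p.1 ∈ ASet G x ∧ p.2 ∈ ASet H y) := by
      rintro p hp ⟨h1, h2⟩
      exact hcon p hp h1 h2
    exact not_corner hxa hxb hab la lb hyc hyd hcd lc ld hS (a, c) (hSpds (a, c))
      ⟨Or.inl rfl, Or.inl rfl⟩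
  choose f hfS hf1 hf2 using hex
  have hinj : Function.Injective
      (fun p : {v // IsStrongSupport G v} × {w // IsStrongSupport H w} =>
        (⟨f p, hfS p⟩ : {q : V × W // q ∈ S})) := by
    rintro ⟨⟨x, hx⟩, ⟨y, hy⟩⟩ ⟨⟨x', hx'⟩, ⟨y', hy'⟩⟩ h
    have heq : f (⟨x, hx⟩, ⟨y, hy⟩) = f (⟨x', hx'⟩, ⟨y', hy'⟩) := congrArg Subtype.val h
    have hx12 := ASet_eq hx hx' (hf1 (⟨x, hx⟩, ⟨y, hy⟩)) (heq ▸ hf1 (⟨x', hx'⟩, ⟨y', hy'⟩))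
    have hy12 := ASet_eq hy hy' (hf2 (⟨x, hx⟩, ⟨y, hy⟩)) (heq ▸ hf2 (⟨x', hx'⟩, ⟨y', hy'⟩))
    subst hx12; subst hy12; rfl
  have := Nat.card_le_card_of_injective _ hinj
  rw [Nat.card_prod] at this
  simpa [ssCount, Nat.card_eq_fintype_card, Fintype.card_coe] using this

end PaperPD
end

section
/- If G is a connected graph with γ_P(G) = γ(G), then γ_P(G □ P_n) = γ(G) for every path P_n on n ≥ 1 vertices. -/
namespace PaperPD

open SimpleGraph

variable {V : Type} {W : Type}

private lemma proj {V : Type} {n : ℕ} (G : SimpleGraph V) (S : Set (V × Fin n))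
    (p : V × Fin n) (h : Observed (G.boxProd (pathGraph n)) S p) :
    Observed G (Prod.fst '' S) p.1 := by
  induction h with
  | mem v hv => exact Observed.mem _ ⟨v, hv, rfl⟩
  | dom u v hu hadj =>
    rcases (SimpleGraph.boxProd_adj.1 hadj) with ⟨h1, h2⟩ | ⟨h1, h2⟩
    · exact Observed.dom u.1 v.1 ⟨u, hu, rfl⟩ h1
    · rw [← h2]; exact Observed.mem _ ⟨u, hu, rfl⟩
  | prop u v hu hadj hall ih ihall =>
    rcases (SimpleGraph.boxProd_adj.1 hadj) with ⟨h1, h2⟩ | ⟨h1, h2⟩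
    · refine Observed.prop u.1 v.1 ih h1 ?_
      intro w hw hne
      have : (w, u.2) ≠ v := by
        intro hc; apply hne; rw [← hc]
      exact ihall (w, u.2) (SimpleGraph.boxProd_adj.2 (Or.inl ⟨hw, rfl⟩)) this
    · rw [← h2]; exact ih

private lemma layers {V : Type} {n : ℕ} (G : SimpleGraph V) (D : Set V)
    (hD : ∀ v, ∃ u ∈ D, v = u ∨ G.Adj u v) (hn : 1 ≤ n) :
    ∀ p : V × Fin n, Observed (G.boxProd (pathGraph n))
      ((fun v => (v, (⟨0, hn⟩ : Fin n))) '' D) p := by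
  set P := pathGraph n
  set S : Set (V × Fin n) := (fun v => (v, (⟨0, hn⟩ : Fin n))) '' D
  have key : ∀ k : ℕ, ∀ i : Fin n, i.val = k → ∀ v : V,
      Observed (G.boxProd P) S (v, i) := by
    intro k
    induction k using Nat.strong_induction_on with
    | _ k ih =>
      intro i hi v
      match k, hi with
      | 0, hi =>
        have hi0 : i = ⟨0, hn⟩ := Fin.ext hi
        subst hi0
        obtain ⟨u, hu, h⟩ := hD v
        rcases h with rfl | hadj
        · exact Observed.mem _ ⟨v, hu, rfl⟩
        · exact Observed.dom (u, ⟨0, hn⟩) _ ⟨u, hu, rfl⟩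
            (SimpleGraph.boxProd_adj.2 (Or.inl ⟨hadj, rfl⟩))
      | (m+1), hi =>
        have hm : m < n := lt_trans (by omega) (hi ▸ i.isLt)
        set i' : Fin n := ⟨m, hm⟩
        have hprev : ∀ w, Observed (G.boxProd P) S (w, i') :=
          fun w => ih m (by omega) i' rfl w
        have hadj : (G.boxProd P).Adj (v, i') (v, i) :=
          SimpleGraph.boxProd_adj.2 (Or.inr ⟨pathGraph_adj.2 (Or.inl (by simp [i', hi])), rfl⟩)
        refine Observed.prop (v, i') (v, i) (hprev v) hadj ?_
        rintro ⟨w1, w2⟩ hw hne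
        rcases SimpleGraph.boxProd_adj.1 hw with ⟨h1, h2⟩ | ⟨h1, h2⟩
        · simp only at h2
          rw [← h2]; exact hprev w1
        · simp only at h1 h2
          subst h2
          rcases pathGraph_adj.1 h1 with hL | hR
          · exfalso; apply hne
            have hLv : (i' : ℕ) + 1 = (w2 : ℕ) := hL
            have : w2 = i := Fin.ext (by simp only [i'] at hLv; omega)
            rw [this]
          · have hRv : (w2 : ℕ) + 1 = (i' : ℕ) := hR
            simp only [i'] at hRv
            exact ih w2.val (by omega) w2 rfl v
  intro p
  exact key p.2.val p.2 rfl p.1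

theorem stmt14 {V : Type} [Fintype V] (G : SimpleGraph V)
    (hG : G.Connected) (he : pdNum G = domNum G)
    (n : ℕ) (hn : 1 ≤ n) :
    pdNum (G.boxProd (SimpleGraph.pathGraph n)) = domNum G := by
  classical
  have hdomne : {m | ∃ S : Finset V, S.card = m ∧
      ∀ v, ∃ u ∈ S, v = u ∨ G.Adj u v}.Nonempty :=
    ⟨Finset.univ.card, Finset.univ, rfl, fun v => ⟨v, Finset.mem_univ v, Or.inl rfl⟩⟩
  have hpdne : {m | ∃ S : Finset (V × Fin n), S.card = m ∧
      IsPDS (G.boxProd (SimpleGraph.pathGraph n)) ↑S}.Nonempty :=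
    ⟨Finset.univ.card, Finset.univ, rfl,
      fun v => Observed.mem v (by simp)⟩
  apply le_antisymm
  · -- upper bound
    obtain ⟨D, hDcard, hDdom⟩ := Nat.sInf_mem hdomne
    have hinj : Function.Injective (fun v : V => (v, (⟨0, hn⟩ : Fin n))) :=
      fun a b h => congrArg Prod.fst h
    have hcard : (D.image (fun v => (v, (⟨0, hn⟩ : Fin n)))).card = D.card :=
      Finset.card_image_of_injective _ hinj
    have hPDS : IsPDS (G.boxProd (SimpleGraph.pathGraph n))
        ↑(D.image (fun v => (v, (⟨0, hn⟩ : Fin n)))) := by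
      intro p
      have := layers G (↑D) (fun v => by
        obtain ⟨u, hu, h⟩ := hDdom v; exact ⟨u, hu, h⟩) hn p
      simpa using this
    calc pdNum (G.boxProd (SimpleGraph.pathGraph n))
        ≤ (D.image (fun v => (v, (⟨0, hn⟩ : Fin n)))).card :=
          Nat.sInf_le ⟨_, rfl, hPDS⟩
      _ = domNum G := by rw [hcard, hDcard]; rfl
  · -- lower bound
    obtain ⟨S, hScard, hSpds⟩ := Nat.sInf_mem hpdne
    have hproj : IsPDS G ↑(S.image Prod.fst) := by
      intro v
      have := proj G (↑S) (v, (⟨0, hn⟩ : Fin n)) (hSpds _)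
      simpa using this
    have h1 : pdNum G ≤ (S.image Prod.fst).card := Nat.sInf_le ⟨_, rfl, hproj⟩
    have h2 : (S.image Prod.fst).card ≤ S.card := Finset.card_image_le
    rw [← he]
    calc pdNum G ≤ S.card := le_trans h1 h2
      _ = pdNum (G.boxProd (SimpleGraph.pathGraph n)) := hScard

end PaperPD
end

section
/- If a claw-free diamond-free cubic graph G of order n has a 2-factor C₁ ∪ ⋯ ∪ C_k in which every cycle C_i has length at least 6, then γ_P(G) ≥ k; consequently, if G has a 2-factor consisting only of 6-cycles, then γ_P(G) = n/6. -/
namespace PaperPD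

open SimpleGraph

variable {V : Type} {W : Type}

set_option linter.unusedSectionVars false
set_option maxHeartbeats 1000000

section Aux

variable {V : Type} [Fintype V] {G F : SimpleGraph V}
variable [DecidableRel G.Adj] [DecidableRel F.Adj]

lemma walk_closed (K : Set V) (hK : ∀ x ∈ K, ∀ z, F.Adj x z → z ∈ K) :
    ∀ {x y : V}, F.Walk x y → x ∈ K → y ∈ K := by
  intro x y p
  induction p with
  | nil => exact id
  | cons h p ih => exact fun hx => ih (hK _ hx _ h)

lemma fiber_closed (K : Set V) (hK : ∀ x ∈ K, ∀ z, F.Adj x z → z ∈ K) {v : V}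
    (hv : v ∈ K) {w : V}
    (hw : F.connectedComponentMk w = F.connectedComponentMk v) : w ∈ K := by
  have hr : F.Reachable v w := (SimpleGraph.ConnectedComponent.eq.mp hw).symm
  exact hr.elim fun p => walk_closed K hK p hv

lemma fiber_card_le (K : Finset V) (hK : ∀ x ∈ K, ∀ z, F.Adj x z → z ∈ K)
    {v : V} (hv : v ∈ K) :
    Nat.card {w : V // F.connectedComponentMk w = F.connectedComponentMk v} ≤ K.card := by
  have hmem : ∀ w : {w : V // F.connectedComponentMk w = F.connectedComponentMk v},
      (w : V) ∈ K := fun w => fiber_closed (K : Set V)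
        (by intro x hx z hz; exact hK x (by simpa using hx) z hz) hv w.2
  have hinj : Function.Injective
      (fun w : {w : V // F.connectedComponentMk w = F.connectedComponentMk v} =>
        (⟨(w : V), hmem w⟩ : {x : V // x ∈ K})) := by
    intro u w h
    simpa [Subtype.ext_iff] using h
  calc Nat.card {w : V // F.connectedComponentMk w = F.connectedComponentMk v}
      ≤ Nat.card {x : V // x ∈ K} := Nat.card_le_card_of_injective _ hinj
    _ = K.card := by simp [Nat.card_eq_fintype_card]

/-- Local structure around a vertex in a claw-free diamond-free cubic graph with
a 2-factor: neighbours `a b c`, unique edge `a-b`, `a` is an `F`-neighbour,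
and the second `F`-neighbour is `b` or `c`. -/
def LocalPat (G F : SimpleGraph V) (v a b c : V) : Prop :=
  a ≠ b ∧ a ≠ c ∧ b ≠ c ∧ G.Adj v a ∧ G.Adj v b ∧ G.Adj v c ∧
  (∀ w, G.Adj v w → w = a ∨ w = b ∨ w = c) ∧
  G.Adj a b ∧ ¬ G.Adj a c ∧ ¬ G.Adj b c ∧ F.Adj v a ∧
  ((F.Adj v b ∧ ∀ w, F.Adj v w → w = a ∨ w = b) ∨
    (F.Adj v c ∧ ∀ w, F.Adj v w → w = a ∨ w = c))

/-- `v` has an `F`-neighbour outside the triangle of `v`. -/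
def EndV (G F : SimpleGraph V) (v : V) : Prop :=
  ∃ u, F.Adj v u ∧ ∀ w, ¬ (G.Adj v w ∧ G.Adj u w)

lemma nbr_char {v a b c : V} (hdeg : G.degree v = 3) (hab : a ≠ b) (hac : a ≠ c)
    (hbc : b ≠ c) (h1 : G.Adj v a) (h2 : G.Adj v b) (h3 : G.Adj v c) :
    ∀ w, G.Adj v w → w = a ∨ w = b ∨ w = c := by
  classical
  have hsub : ({a, b, c} : Finset V) ⊆ G.neighborFinset v := by
    intro w hw
    simp only [Finset.mem_insert, Finset.mem_singleton] at hw
    rcases hw with rfl | rfl | rfl <;>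
      simp [SimpleGraph.mem_neighborFinset, h1, h2, h3]
  have hcard3 : ({a, b, c} : Finset V).card = 3 := by
    rw [Finset.card_insert_of_notMem (by simp [hab, hac]),
      Finset.card_insert_of_notMem (by simp [hbc]), Finset.card_singleton]
  have hcard : (G.neighborFinset v).card = 3 := by
    rw [SimpleGraph.card_neighborFinset_eq_degree]; exact hdeg
  have heq : ({a, b, c} : Finset V) = G.neighborFinset v :=
    Finset.eq_of_subset_of_card_le hsub (by omega)
  intro w hw
  have : w ∈ ({a, b, c} : Finset V) := by
    rw [heq]; simpa [SimpleGraph.mem_neighborFinset] using hw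
  simpa using this

variable (hclaw : ClawFree G) (hdiam : DiamondFree G) (hcubic : ∀ v, G.degree v = 3)
  (hle : F ≤ G) (h2reg : ∀ v, F.degree v = 2)
  (hbig : ∀ c : F.ConnectedComponent,
    6 ≤ Nat.card {a : V // F.connectedComponentMk a = c})

include hclaw hdiam hcubic hle h2reg hbig

lemma card_le_contra {u a b : V}
    (hchu : ∀ w, F.Adj u w → w = a ∨ w = b)
    (hcha : ∀ w, F.Adj a w → w = u ∨ w = b)
    (hchb : ∀ w, F.Adj b w → w = u ∨ w = a) : False := by
  classical
  have hclosed : ∀ x ∈ ({u, a, b} : Finset V), ∀ z, F.Adj x z → z ∈ ({u, a, b} : Finset V) := by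
    intro x hx z hz
    simp only [Finset.mem_insert, Finset.mem_singleton] at hx ⊢
    rcases hx with rfl | rfl | rfl
    · rcases hchu z hz with rfl | rfl <;> tauto
    · rcases hcha z hz with rfl | rfl <;> tauto
    · rcases hchb z hz with rfl | rfl <;> tauto
  have hle3 : ({u, a, b} : Finset V).card ≤ 3 := by
    apply le_trans (Finset.card_insert_le _ _)
    have : ({a, b} : Finset V).card ≤ 2 := by
      apply le_trans (Finset.card_insert_le _ _); simp
    omega
  have h1 := fiber_card_le ({u, a, b} : Finset V) hclosed (v := u) (by simp)
  have h2 := hbig (F.connectedComponentMk u)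
  omega

lemma k4_contra {v a b c : V} (hab : a ≠ b) (hac : a ≠ c) (hbc : b ≠ c)
    (ha : G.Adj v a) (hb : G.Adj v b) (hc : G.Adj v c)
    (e1 : G.Adj a b) (e2 : G.Adj a c) (e3 : G.Adj b c) : False := by
  classical
  have hva : v ≠ a := G.ne_of_adj ha
  have hvb : v ≠ b := G.ne_of_adj hb
  have hvc : v ≠ c := G.ne_of_adj hc
  have chv := nbr_char (G := G) (hcubic v) hab hac hbc ha hb hc
  have cha := nbr_char (G := G) (hcubic a) hvb hvc hbc ha.symm e1 e2
  have chb := nbr_char (G := G) (hcubic b) hva hvc hac hb.symm e1.symm e3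
  have chc := nbr_char (G := G) (hcubic c) hva hvb hab hc.symm e2.symm e3.symm
  have hclosed : ∀ x ∈ ({v, a, b, c} : Finset V), ∀ z, F.Adj x z →
      z ∈ ({v, a, b, c} : Finset V) := by
    intro x hx z hz
    have hzG := hle hz
    simp only [Finset.mem_insert, Finset.mem_singleton] at hx ⊢
    rcases hx with rfl | rfl | rfl | rfl
    · rcases chv z hzG with rfl | rfl | rfl <;> tauto
    · rcases cha z hzG with rfl | rfl | rfl <;> tauto
    · rcases chb z hzG with rfl | rfl | rfl <;> tauto
    · rcases chc z hzG with rfl | rfl | rfl <;> tauto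
  have hle4 : ({v, a, b, c} : Finset V).card ≤ 4 := by
    apply le_trans (Finset.card_insert_le _ _)
    have h1 : ({a, b, c} : Finset V).card ≤ 3 := by
      apply le_trans (Finset.card_insert_le _ _)
      have : ({b, c} : Finset V).card ≤ 2 := by
        apply le_trans (Finset.card_insert_le _ _); simp
      omega
    omega
  have h1 := fiber_card_le ({v, a, b, c} : Finset V) hclosed (v := v) (by simp)
  have h2 := hbig (F.connectedComponentMk v)
  omega

lemma build_pat {v a b c : V} (hab : a ≠ b) (hac : a ≠ c) (hbc : b ≠ c)
    (ha : G.Adj v a) (hb : G.Adj v b) (hc : G.Adj v c)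
    (hchar : ∀ w, G.Adj v w → w = a ∨ w = b ∨ w = c)
    (eab : G.Adj a b) (nac : ¬ G.Adj a c) (nbc : ¬ G.Adj b c) :
    ∃ a' b' c', LocalPat G F v a' b' c' := by
  classical
  obtain ⟨x, y, hxy, hFset⟩ := Finset.card_eq_two.mp
    (by rw [SimpleGraph.card_neighborFinset_eq_degree]; exact h2reg v :
      (F.neighborFinset v).card = 2)
  have hFx : F.Adj v x := by
    rw [← SimpleGraph.mem_neighborFinset, hFset]; simp
  have hFy : F.Adj v y := by
    rw [← SimpleGraph.mem_neighborFinset, hFset]; simp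
  have hFchar : ∀ w, F.Adj v w → w = x ∨ w = y := by
    intro w hw
    have : w ∈ F.neighborFinset v := (SimpleGraph.mem_neighborFinset _ _ _).mpr hw
    rw [hFset] at this; simpa using this
  have hx' := hchar x (hle hFx)
  have hy' := hchar y (hle hFy)
  have char' : ∀ w, G.Adj v w → w = b ∨ w = a ∨ w = c := by
    intro w hw; rcases hchar w hw with h | h | h <;> tauto
  rcases hx' with hx' | hx' | hx' <;> rcases hy' with hy' | hy' | hy'
  · exact absurd (hx'.trans hy'.symm) hxy
  · exact ⟨a, b, c, hab, hac, hbc, ha, hb, hc, hchar, eab, nac, nbc, hx' ▸ hFx,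
      Or.inl ⟨hy' ▸ hFy, fun w hw => by
        rcases hFchar w hw with rfl | rfl
        exacts [Or.inl hx', Or.inr hy']⟩⟩
  · exact ⟨a, b, c, hab, hac, hbc, ha, hb, hc, hchar, eab, nac, nbc, hx' ▸ hFx,
      Or.inr ⟨hy' ▸ hFy, fun w hw => by
        rcases hFchar w hw with rfl | rfl
        exacts [Or.inl hx', Or.inr hy']⟩⟩
  · exact ⟨a, b, c, hab, hac, hbc, ha, hb, hc, hchar, eab, nac, nbc, hy' ▸ hFy,
      Or.inl ⟨hx' ▸ hFx, fun w hw => by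
        rcases hFchar w hw with rfl | rfl
        exacts [Or.inr hx', Or.inl hy']⟩⟩
  · exact absurd (hx'.trans hy'.symm) hxy
  · exact ⟨b, a, c, hab.symm, hbc, hac, hb, ha, hc, char', eab.symm, nbc, nac,
      hx' ▸ hFx, Or.inr ⟨hy' ▸ hFy, fun w hw => by
        rcases hFchar w hw with rfl | rfl
        exacts [Or.inl hx', Or.inr hy']⟩⟩
  · exact ⟨a, b, c, hab, hac, hbc, ha, hb, hc, hchar, eab, nac, nbc, hy' ▸ hFy,
      Or.inr ⟨hx' ▸ hFx, fun w hw => by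
        rcases hFchar w hw with rfl | rfl
        exacts [Or.inr hx', Or.inl hy']⟩⟩
  · exact ⟨b, a, c, hab.symm, hbc, hac, hb, ha, hc, char', eab.symm, nbc, nac,
      hy' ▸ hFy, Or.inr ⟨hx' ▸ hFx, fun w hw => by
        rcases hFchar w hw with rfl | rfl
        exacts [Or.inr hx', Or.inl hy']⟩⟩
  · exact absurd (hx'.trans hy'.symm) hxy

lemma exists_localPat (v : V) : ∃ a b c, LocalPat G F v a b c := by
  classical
  obtain ⟨a, b, c, hab, hac, hbc, habc⟩ := Finset.card_eq_three.mp
    (by rw [SimpleGraph.card_neighborFinset_eq_degree]; exact hcubic v :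
      (G.neighborFinset v).card = 3)
  have ha : G.Adj v a := by
    rw [← SimpleGraph.mem_neighborFinset, habc]; simp
  have hb : G.Adj v b := by
    rw [← SimpleGraph.mem_neighborFinset, habc]; simp
  have hc : G.Adj v c := by
    rw [← SimpleGraph.mem_neighborFinset, habc]; simp
  have hchar : ∀ w, G.Adj v w → w = a ∨ w = b ∨ w = c := by
    intro w hw
    have : w ∈ G.neighborFinset v := (SimpleGraph.mem_neighborFinset _ _ _).mpr hw
    rw [habc] at this; simpa using this
  have hva : v ≠ a := G.ne_of_adj ha
  have hvb : v ≠ b := G.ne_of_adj hb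
  have hvc : v ≠ c := G.ne_of_adj hc
  by_cases e1 : G.Adj a b <;> by_cases e2 : G.Adj a c <;> by_cases e3 : G.Adj b c
  · exact absurd (k4_contra hclaw hdiam hcubic hle h2reg hbig hab hac hbc ha hb hc e1 e2 e3) not_false
  · -- edges ab, ac : diamond b v a c
    exact absurd (hdiam b v a c hvb.symm hab.symm hbc hva hvc hac
      hb.symm e1.symm ha hc e2 e3) not_false
  · -- edges ab, bc : diamond a v b c
    exact absurd (hdiam a v b c hva.symm hab hac hvb hvc hbc
      ha.symm e1 hb hc e3 e2) not_false
  · exact build_pat hclaw hdiam hcubic hle h2reg hbig hab hac hbc ha hb hc hchar e1 e2 e3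
  · -- edges ac, bc : diamond a v c b
    exact absurd (hdiam a v c b hva.symm hac hab hvc hvb hbc.symm
      ha.symm e2 hc hb e3.symm e1) not_false
  · -- edge ac only : labels (a, c, b)
    refine build_pat hclaw hdiam hcubic hle h2reg hbig hac hab hbc.symm ha hc hb ?_ e2 e1 (fun h => e3 h.symm)
    intro w hw; rcases hchar w hw with rfl | rfl | rfl <;> tauto
  · -- edge bc only : labels (b, c, a)
    refine build_pat hclaw hdiam hcubic hle h2reg hbig hbc hab.symm hac.symm hb hc ha ?_ e3
      (fun h => e1 h.symm) (fun h => e2 h.symm)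
    intro w hw; rcases hchar w hw with rfl | rfl | rfl <;> tauto
  · exact absurd (hclaw v a b c hab hac hbc ha hb hc e1 e2 e3) not_false

omit hclaw hdiam hcubic hle h2reg hbig in
lemma pair_eq {v a b c : V} (h : LocalPat G F v a b c) {p q : V}
    (hp : G.Adj v p) (hq : G.Adj v q) (hpq : G.Adj p q) :
    (p = a ∧ q = b) ∨ (p = b ∧ q = a) := by
  obtain ⟨hab, hac, hbc, ha, hb, hc, hchar, eab, nac, nbc, hFa, hpat⟩ := h
  rcases hchar p hp with rfl | rfl | rfl <;> rcases hchar q hq with rfl | rfl | rfl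
  · exact absurd hpq (G.loopless.irrefl _)
  · exact Or.inl ⟨rfl, rfl⟩
  · exact absurd hpq nac
  · exact Or.inr ⟨rfl, rfl⟩
  · exact absurd hpq (G.loopless.irrefl _)
  · exact absurd hpq nbc
  · exact absurd hpq.symm nac
  · exact absurd hpq.symm nbc
  · exact absurd hpq (G.loopless.irrefl _)

omit hclaw hdiam hcubic hle h2reg hbig in
lemma fpair {v p q x y : V} (hchar : ∀ w, F.Adj v w → w = p ∨ w = q)
    (hx : F.Adj v x) (hy : F.Adj v y) (hxy : x ≠ y) :
    ∀ w, F.Adj v w → w = x ∨ w = y := by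
  rcases hchar x hx with rfl | rfl <;> rcases hchar y hy with rfl | rfl
  · exact absurd rfl hxy
  · exact hchar
  · exact fun w hw => (hchar w hw).symm
  · exact absurd rfl hxy

omit hclaw hdiam hcubic hle h2reg hbig in
lemma fchar_of {v a b c : V} (h : LocalPat G F v a b c) :
    ∃ p q, p ≠ q ∧ F.Adj v p ∧ F.Adj v q ∧ ∀ w, F.Adj v w → w = p ∨ w = q := by
  obtain ⟨hab, hac, hbc, ha, hb, hc, hchar, eab, nac, nbc, hFa, hpat⟩ := h
  rcases hpat with ⟨hFb, hch⟩ | ⟨hFc, hch⟩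
  · exact ⟨a, b, hab, hFa, hFb, hch⟩
  · exact ⟨a, c, hac, hFa, hFc, hch⟩

omit hclaw hdiam hcubic hle h2reg hbig in
lemma endv_of {v a b c : V} (h : LocalPat G F v a b c) (hFc : F.Adj v c) :
    EndV G F v := by
  obtain ⟨hab, hac, hbc, ha, hb, hc, hchar, eab, nac, nbc, hFa, hpat⟩ := h
  refine ⟨c, hFc, ?_⟩
  rintro w ⟨hvw, hcw⟩
  rcases hchar w hvw with rfl | rfl | rfl
  · exact nac hcw.symm
  · exact nbc hcw.symm
  · exact absurd hcw (G.loopless.irrefl _)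

omit hclaw hdiam hcubic hle h2reg hbig in
lemma end_pattern {v a b c : V} (h : LocalPat G F v a b c) (hend : EndV G F v) :
    F.Adj v c ∧ ∀ w, F.Adj v w → w = a ∨ w = c := by
  obtain ⟨hab, hac, hbc, ha, hb, hc, hchar, eab, nac, nbc, hFa, hpat⟩ := h
  rcases hpat with ⟨hFb, hch⟩ | hp
  · exfalso
    obtain ⟨z, hFz, hno⟩ := hend
    rcases hch z hFz with rfl | rfl
    · exact hno b ⟨hb, eab⟩
    · exact hno a ⟨ha, eab.symm⟩
  · exact hp

omit hclaw hdiam hcubic hle h2reg hbig in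
lemma middle_of {v a b c : V} (h : LocalPat G F v a b c) (hnend : ¬ EndV G F v) :
    F.Adj v b ∧ ∀ w, F.Adj v w → w = a ∨ w = b := by
  rcases h.2.2.2.2.2.2.2.2.2.2.2 with hp | hp
  · exact hp
  · exact absurd (endv_of h hp.1) hnend

lemma middle_char_of {x p q : V} (hxp : G.Adj x p) (hxq : G.Adj x q)
    (hpq : G.Adj p q) (hnend : ¬ EndV G F x) :
    F.Adj x p ∧ F.Adj x q ∧ ∀ w, F.Adj x w → w = p ∨ w = q := by
  obtain ⟨a1, b1, c1, hx'⟩ := exists_localPat hclaw hdiam hcubic hle h2reg hbig x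
  have hFa1 : F.Adj x a1 := hx'.2.2.2.2.2.2.2.2.2.2.1
  obtain ⟨hFb1, hch⟩ := middle_of hx' hnend
  rcases pair_eq hx' hxp hxq hpq with ⟨hp1, hq1⟩ | ⟨hp1, hq1⟩
  · subst hp1; subst hq1; exact ⟨hFa1, hFb1, hch⟩
  · subst hp1; subst hq1; exact ⟨hFb1, hFa1, fun w hw => (hch w hw).symm⟩

lemma nbrs_same_comp {v : V} (hend : EndV G F v) :
    ∀ w, G.Adj v w → F.connectedComponentMk w = F.connectedComponentMk v := by
  obtain ⟨a, b, c, h⟩ := exists_localPat hclaw hdiam hcubic hle h2reg hbig v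
  obtain ⟨hab, hac, hbc, ha, hb, hc, hchar, eab, nac, nbc, hFa, hpat⟩ := h
  obtain ⟨hFc, hch⟩ := end_pattern
    ⟨hab, hac, hbc, ha, hb, hc, hchar, eab, nac, nbc, hFa, hpat⟩ hend
  have hma : F.connectedComponentMk a = F.connectedComponentMk v :=
    SimpleGraph.ConnectedComponent.connectedComponentMk_eq_of_adj hFa.symm
  have hmc : F.connectedComponentMk c = F.connectedComponentMk v :=
    SimpleGraph.ConnectedComponent.connectedComponentMk_eq_of_adj hFc.symm
  have hmb : F.connectedComponentMk b = F.connectedComponentMk v := by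
    obtain ⟨a1, b1, c1, hb'⟩ := exists_localPat hclaw hdiam hcubic hle h2reg hbig b
    have hFa1 : F.Adj b a1 := hb'.2.2.2.2.2.2.2.2.2.2.1
    rcases pair_eq hb' hb.symm eab.symm ha with ⟨hp1, hq1⟩ | ⟨hp1, hq1⟩
    · rw [← hp1] at hFa1
      exact SimpleGraph.ConnectedComponent.connectedComponentMk_eq_of_adj hFa1
    · rw [← hq1] at hFa1
      have : F.connectedComponentMk b = F.connectedComponentMk a :=
        SimpleGraph.ConnectedComponent.connectedComponentMk_eq_of_adj hFa1
      exact this.trans hma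
  intro w hw
  rcases hchar w hw with rfl | rfl | rfl
  · exact hma
  · exact hmb
  · exact hmc

lemma exists_end (c : F.ConnectedComponent) :
    ∃ v, F.connectedComponentMk v = c ∧ EndV G F v := by
  obtain ⟨v, rfl⟩ := c.exists_rep
  obtain ⟨a, b, c0, hv⟩ := exists_localPat hclaw hdiam hcubic hle h2reg hbig v
  obtain ⟨hab, hac, hbc, ha, hb, hc, hchar, eab, nac, nbc, hFa, hpat⟩ := hv
  by_cases hendv : EndV G F v
  · exact ⟨v, rfl, hendv⟩
  obtain ⟨hFb, hchv⟩ := middle_of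
    ⟨hab, hac, hbc, ha, hb, hc, hchar, eab, nac, nbc, hFa, hpat⟩ hendv
  by_cases henda : EndV G F a
  · exact ⟨a, SimpleGraph.ConnectedComponent.connectedComponentMk_eq_of_adj hFa.symm,
      henda⟩
  by_cases hendb : EndV G F b
  · exact ⟨b, SimpleGraph.ConnectedComponent.connectedComponentMk_eq_of_adj hFb.symm,
      hendb⟩
  exfalso
  obtain ⟨_, _, hcha⟩ :=
    middle_char_of hclaw hdiam hcubic hle h2reg hbig ha.symm eab (hb) henda
  obtain ⟨_, _, hchb⟩ :=
    middle_char_of hclaw hdiam hcubic hle h2reg hbig hb.symm eab.symm (ha) hendb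
  exact card_le_contra hclaw hdiam hcubic hle h2reg hbig hchv hcha hchb

lemma case_tri {u v t : V} (huv : G.Adj u v) (hut : G.Adj u t) (hvt : G.Adj v t)
    (hFuv : F.Adj u v) (hnendt : ¬ EndV G F t) (hendv : EndV G F v) : False := by
  obtain ⟨hFtu, hFtv, _⟩ :=
    middle_char_of hclaw hdiam hcubic hle h2reg hbig hut.symm hvt.symm huv hnendt
  have hut2 : u ≠ t := G.ne_of_adj hut
  obtain ⟨a2, b2, c2, hv'⟩ := exists_localPat hclaw hdiam hcubic hle h2reg hbig v
  obtain ⟨p2, q2, hp2q2, _, _, hvch0⟩ := fchar_of hv'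
  have hvch := fpair (F := F) hvch0 hFuv.symm hFtv.symm hut2
  obtain ⟨z, hFz, hno⟩ := hendv
  rcases hvch z hFz with rfl | rfl
  · exact hno t ⟨hvt, hut⟩
  · exact hno u ⟨huv.symm, hut.symm⟩

lemma comp_hits {S : Set V} (hS : IsPDS G S) (c : F.ConnectedComponent) :
    ∃ s ∈ S, F.connectedComponentMk s = c := by
  by_contra hcon
  push_neg at hcon
  obtain ⟨v0, hv0c, hv0end⟩ := exists_end hclaw hdiam hcubic hle h2reg hbig c
  have main : ∀ x, Observed G S x →
      F.connectedComponentMk x = c → EndV G F x → False := by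
    intro x hx
    induction hx with
    | mem v hv => exact fun hm _ => hcon v hv hm
    | dom u v hu hadj =>
      intro hm hend
      have hmu : F.connectedComponentMk u = c := by
        rw [← hm]
        exact nbrs_same_comp hclaw hdiam hcubic hle h2reg hbig hend u hadj.symm
      exact hcon u hu hmu
    | prop u v hu hadj hall ihu ihall =>
      intro hmv hendv
      have hmku : F.connectedComponentMk u = c := by
        rw [← hmv]
        exact nbrs_same_comp hclaw hdiam hcubic hle h2reg hbig hendv u hadj.symm
      obtain ⟨a, b, c0, hu'⟩ := exists_localPat hclaw hdiam hcubic hle h2reg hbig u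
      obtain ⟨hab, hac, hbc, ha, hb, hc, hchar, eab, nac, nbc, hFa, hpat⟩ := hu'
      have hu'' : LocalPat G F u a b c0 :=
        ⟨hab, hac, hbc, ha, hb, hc, hchar, eab, nac, nbc, hFa, hpat⟩
      obtain ⟨hFb, hchu⟩ := middle_of hu'' (fun he => ihu hmku he)
      have hmka : F.connectedComponentMk a = c :=
        (SimpleGraph.ConnectedComponent.connectedComponentMk_eq_of_adj hFa.symm).trans hmku
      have hmkb : F.connectedComponentMk b = c :=
        (SimpleGraph.ConnectedComponent.connectedComponentMk_eq_of_adj hFb.symm).trans hmku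
      rcases hchar v hadj with rfl | rfl | rfl
      · -- v = a : the forced vertex is in the triangle of u
        have hnendb : ¬ EndV G F b := fun he => ihall b hb hab.symm hmkb he
        exact case_tri hclaw hdiam hcubic hle h2reg hbig hadj hb eab hFa hnendb hendv
      · -- v = b
        have hnenda : ¬ EndV G F a := fun he => ihall a ha hab hmka he
        exact case_tri hclaw hdiam hcubic hle h2reg hbig hadj ha eab.symm hFb
          hnenda hendv
      · -- v = c0 : the forced vertex is outside the triangle of u
        have hnenda : ¬ EndV G F a := fun he => ihall a ha hac hmka he
        have hnendb : ¬ EndV G F b := fun he => ihall b hb hbc hmkb he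
        obtain ⟨_, _, hcha⟩ :=
          middle_char_of hclaw hdiam hcubic hle h2reg hbig ha.symm eab hb hnenda
        obtain ⟨_, _, hchb⟩ :=
          middle_char_of hclaw hdiam hcubic hle h2reg hbig hb.symm eab.symm ha hnendb
        exact card_le_contra hclaw hdiam hcubic hle h2reg hbig hchu hcha hchb
  exact main v0 (hS v0) hv0c hv0end

omit hclaw hdiam hcubic hle h2reg in
lemma closed_contra (K : Finset V) (hK : ∀ x ∈ K, ∀ z, F.Adj x z → z ∈ K)
    {v : V} (hv : v ∈ K) (hcard : K.card ≤ 5) : False := by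
  have h1 := fiber_card_le K hK hv
  have h2 := hbig (F.connectedComponentMk v)
  omega

lemma comp_obs (h6 : ∀ c : F.ConnectedComponent,
      Nat.card {a : V // F.connectedComponentMk a = c} = 6)
    {s : V} (hsend : EndV G F s) {S : Set V} (hsS : s ∈ S) :
    ∀ w, F.connectedComponentMk w = F.connectedComponentMk s → Observed G S w := by
  classical
  obtain ⟨a, b, c0, hs0⟩ := exists_localPat hclaw hdiam hcubic hle h2reg hbig s
  have hs'' := hs0
  obtain ⟨hab, hac, hbc, ha, hb, hc, hchar, eab, nac, nbc, hFa, hpat⟩ := hs0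
  obtain ⟨hFc, hsch⟩ := end_pattern hs'' hsend
  have hsa : s ≠ a := G.ne_of_adj ha
  have hsb : s ≠ b := G.ne_of_adj hb
  have hsc0 : s ≠ c0 := G.ne_of_adj hc
  -- analysis of b : triangle {b, a, s}, external F-neighbour e = c1
  have hnFbs : ¬ F.Adj b s := by
    intro hh
    rcases hsch b hh.symm with h | h
    · exact hab h.symm
    · exact hbc h
  obtain ⟨a1, b1, c1, hb0⟩ := exists_localPat hclaw hdiam hcubic hle h2reg hbig b
  have hFa1 : F.Adj b a1 := hb0.2.2.2.2.2.2.2.2.2.2.1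
  rcases pair_eq hb0 hb.symm eab.symm ha with ⟨hp1, hq1⟩ | ⟨hp1, hq1⟩
  · rw [← hp1] at hFa1; exact absurd hFa1 hnFbs
  · subst hp1; subst hq1
    have hb'' := hb0
    obtain ⟨hba1, hba2, hbs1, hbadj1, hbadj2, hbadj3, hbchar, beas, bnac, bnsc,
      hFba, hbpat⟩ := hb0
    rcases hbpat with ⟨hFbs, _⟩ | ⟨hFbe, hbch⟩
    · exact absurd hFbs hnFbs
    -- a's F-character
    have hach : ∀ w, F.Adj a w → w = s ∨ w = b := by
      obtain ⟨a2, b2, c2, ha'⟩ := exists_localPat hclaw hdiam hcubic hle h2reg hbig a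
      obtain ⟨p, q, hpq, _, _, hach0⟩ := fchar_of ha'
      exact fpair (F := F) hach0 hFa.symm hFba.symm hsb
    -- structure of c0
    obtain ⟨a3, b3, c3, hc0'⟩ := exists_localPat hclaw hdiam hcubic hle h2reg hbig c0
    -- e = c1 is distinct from s, a, b, c0
    have hes : c1 ≠ s := hbs1.symm
    have hea : c1 ≠ a := hba2.symm
    have heb : c1 ≠ b := (G.ne_of_adj hbadj3).symm
    have hec0 : c1 ≠ c0 := by
      intro h
      have hx : F.Adj b c0 := h ▸ hFbe
      obtain ⟨p, q, hpq, _, _, hc0ch0⟩ := fchar_of hc0'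
      have hc0ch2 : ∀ w, F.Adj c0 w → w = s ∨ w = b :=
        fpair (F := F) hc0ch0 hFc.symm hx.symm hsb
      refine closed_contra hbig ({s, a, b, c0} : Finset V) ?_ (v := s) (by simp) ?_
      · intro x hx' z hz
        simp only [Finset.mem_insert, Finset.mem_singleton] at hx' ⊢
        rcases hx' with rfl | rfl | rfl | rfl
        · rcases hsch z hz with rfl | rfl <;> tauto
        · rcases hach z hz with rfl | rfl <;> tauto
        · rcases hbch z hz with rfl | rfl
          · tauto
          · exact Or.inr (Or.inr (Or.inr h))
        · rcases hc0ch2 z hz with rfl | rfl <;> tauto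
      · apply le_trans (Finset.card_insert_le _ _)
        apply Nat.succ_le_succ
        apply le_trans (Finset.card_insert_le _ _)
        apply Nat.succ_le_succ
        apply le_trans (Finset.card_insert_le _ _)
        simp
    -- the sixth vertex y
    obtain ⟨y, hFy, hys, hc0ch⟩ : ∃ y, F.Adj c0 y ∧ y ≠ s ∧
        ∀ w, F.Adj c0 w → w = s ∨ w = y := by
      obtain ⟨p, q, hpq, hFp, hFq, hc0ch0⟩ := fchar_of hc0'
      rcases hc0ch0 s hFc.symm with hsp | hsp
      · refine ⟨q, hFq, fun h => hpq (hsp.symm.trans h.symm), ?_⟩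
        intro w hw
        rcases hc0ch0 w hw with rfl | rfl
        · exact Or.inl hsp.symm
        · exact Or.inr rfl
      · refine ⟨p, hFp, fun h => hpq (h.trans hsp), ?_⟩
        intro w hw
        rcases hc0ch0 w hw with rfl | rfl
        · exact Or.inr rfl
        · exact Or.inl hsp.symm
    have hya : y ≠ a := by
      rintro rfl
      rcases hach c0 hFy.symm with h | h
      · exact hsc0 h.symm
      · exact hbc h.symm
    have hyb : y ≠ b := by
      rintro rfl
      rcases hbch c0 hFy.symm with h | h
      · exact hac h.symm
      · exact hec0 h.symm
    have hyc0 : y ≠ c0 := (F.ne_of_adj hFy).symm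
    have hye : y ≠ c1 := by
      intro h
      have hFce : F.Adj c0 c1 := h ▸ hFy
      have hech : ∀ w, F.Adj c1 w → w = b ∨ w = c0 := by
        obtain ⟨a4, b4, c4, he'⟩ := exists_localPat hclaw hdiam hcubic hle h2reg hbig c1
        obtain ⟨p, q, hpq, _, _, hech0⟩ := fchar_of he'
        exact fpair (F := F) hech0 hFbe.symm hFce.symm hbc
      refine closed_contra hbig ({s, a, b, c0, c1} : Finset V) ?_ (v := s) (by simp) ?_
      · intro x hx' z hz
        simp only [Finset.mem_insert, Finset.mem_singleton] at hx' ⊢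
        rcases hx' with rfl | rfl | rfl | rfl | rfl
        · rcases hsch z hz with rfl | rfl <;> tauto
        · rcases hach z hz with rfl | rfl <;> tauto
        · rcases hbch z hz with rfl | rfl <;> tauto
        · rcases hc0ch z hz with rfl | rfl
          · tauto
          · exact Or.inr (Or.inr (Or.inr (Or.inr h)))
        · rcases hech z hz with rfl | rfl <;> tauto
      · apply le_trans (Finset.card_insert_le _ _)
        apply Nat.succ_le_succ
        apply le_trans (Finset.card_insert_le _ _)
        apply Nat.succ_le_succ
        apply le_trans (Finset.card_insert_le _ _)
        apply Nat.succ_le_succ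
        apply le_trans (Finset.card_insert_le _ _)
        simp
    -- component memberships
    have hmc0 : F.connectedComponentMk c0 = F.connectedComponentMk s :=
      SimpleGraph.ConnectedComponent.connectedComponentMk_eq_of_adj hFc.symm
    have hma : F.connectedComponentMk a = F.connectedComponentMk s :=
      SimpleGraph.ConnectedComponent.connectedComponentMk_eq_of_adj hFa.symm
    have hmb : F.connectedComponentMk b = F.connectedComponentMk s :=
      (SimpleGraph.ConnectedComponent.connectedComponentMk_eq_of_adj hFba).trans hma
    have hme : F.connectedComponentMk c1 = F.connectedComponentMk s :=
      (SimpleGraph.ConnectedComponent.connectedComponentMk_eq_of_adj hFbe.symm).trans hmb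
    have hmy : F.connectedComponentMk y = F.connectedComponentMk s :=
      (SimpleGraph.ConnectedComponent.connectedComponentMk_eq_of_adj hFy.symm).trans hmc0
    -- the fibre is exactly {s, a, b, c0, c1, y}
    have hfibcard : (Finset.univ.filter
        (fun w => F.connectedComponentMk w = F.connectedComponentMk s)).card = 6 := by
      have h1 := h6 (F.connectedComponentMk s)
      rw [Nat.card_eq_fintype_card, Fintype.card_subtype] at h1
      exact h1
    have hKfcard : ({s, a, b, c0, c1, y} : Finset V).card = 6 := by
      rw [Finset.card_insert_of_notMem (by simp [hsa, hsb, hsc0, hes.symm, hys.symm]),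
        Finset.card_insert_of_notMem (by simp [hab, hac, hea.symm, hya.symm]),
        Finset.card_insert_of_notMem (by simp [hbc, heb.symm, hyb.symm]),
        Finset.card_insert_of_notMem (by simp [hec0.symm, hyc0.symm]),
        Finset.card_insert_of_notMem (by simp [hye.symm]), Finset.card_singleton]
    have hKsub : ({s, a, b, c0, c1, y} : Finset V) ⊆ Finset.univ.filter
        (fun w => F.connectedComponentMk w = F.connectedComponentMk s) := by
      intro w hw
      simp only [Finset.mem_insert, Finset.mem_singleton] at hw
      simp only [Finset.mem_filter, Finset.mem_univ, true_and]
      rcases hw with rfl | rfl | rfl | rfl | rfl | rfl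
      exacts [rfl, hma, hmb, hmc0, hme, hmy]
    have hfib_eq : (Finset.univ.filter
        (fun w => F.connectedComponentMk w = F.connectedComponentMk s)) =
        ({s, a, b, c0, c1, y} : Finset V) :=
      (Finset.eq_of_subset_of_card_le hKsub (by omega)).symm
    -- non-adjacencies of c0 within the first triangle
    have hnc0a : ¬ G.Adj c0 a := by
      intro hh
      rcases pair_eq hs'' hc ha hh with ⟨h1, _⟩ | ⟨h1, _⟩
      · exact hac.symm h1
      · exact hbc.symm h1
    have hnc0b : ¬ G.Adj c0 b := by
      intro hh
      rcases pair_eq hs'' hc hb hh with ⟨h1, _⟩ | ⟨h1, _⟩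
      · exact hac.symm h1
      · exact hbc.symm h1
    -- every neighbour of c0 is s, y or c1
    have hc0nbr : ∀ w, G.Adj c0 w → w = s ∨ w = y ∨ w = c1 := by
      intro w hw
      by_cases hws : w = s
      · exact Or.inl hws
      by_cases hwy : w = y
      · exact Or.inr (Or.inl hwy)
      refine Or.inr (Or.inr ?_)
      have hnsw : ¬ G.Adj s w := by
        intro hh
        rcases hchar w hh with rfl | rfl | rfl
        · exact hnc0a hw
        · exact hnc0b hw
        · exact (G.ne_of_adj hw) rfl
      have hnsy : ¬ G.Adj s y := by
        intro hh
        rcases hchar y hh with rfl | rfl | rfl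
        · exact hya rfl
        · exact hyb rfl
        · exact hyc0 rfl
      have hc0copy := hc0'
      obtain ⟨h3ab, h3ac, h3bc, h3a, h3b, h3c, char3, e3ab, n3ac, n3bc, hF3, pat3⟩ :=
        hc0copy
      have hsmem := char3 s hc.symm
      have hymem := char3 y (hle hFy)
      have hwmem := char3 w hw
      have hyw : G.Adj y w := by
        rcases hsmem with h1 | h1 | h1 <;> rcases hymem with h2 | h2 | h2 <;>
          rcases hwmem with h3 | h3 | h3 <;>
          first
          | (rw [h2, h3]; exact e3ab)
          | (rw [h2, h3]; exact e3ab.symm)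
          | (exact absurd (h2.trans h1.symm) hys)
          | (exact absurd (h3.trans h1.symm) hws)
          | (exact absurd (h3.trans h2.symm) hwy)
          | (exact absurd (h2.trans h3.symm) (fun hh => hwy hh.symm))
          | (exfalso; exact hnsy (by rw [h1, h2]; exact e3ab))
          | (exfalso; exact hnsy (by rw [h1, h2]; exact e3ab.symm))
          | (exfalso; exact hnsw (by rw [h1, h3]; exact e3ab))
          | (exfalso; exact hnsw (by rw [h1, h3]; exact e3ab.symm))
      -- w is in the fibre
      obtain ⟨a4, b4, c4, hw'⟩ := exists_localPat hclaw hdiam hcubic hle h2reg hbig w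
      have hF4 : F.Adj w a4 := hw'.2.2.2.2.2.2.2.2.2.2.1
      have hmw : F.connectedComponentMk w = F.connectedComponentMk s := by
        rcases pair_eq hw' hyw.symm hw.symm (hle hFy).symm with ⟨h1, _⟩ | ⟨_, h1⟩
        · rw [← h1] at hF4
          exact (SimpleGraph.ConnectedComponent.connectedComponentMk_eq_of_adj
            hF4).trans hmy
        · rw [← h1] at hF4
          exact (SimpleGraph.ConnectedComponent.connectedComponentMk_eq_of_adj
            hF4).trans hmc0
      have hwK : w ∈ ({s, a, b, c0, c1, y} : Finset V) := by
        rw [← hfib_eq]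
        simp only [Finset.mem_filter, Finset.mem_univ, true_and]
        exact hmw
      simp only [Finset.mem_insert, Finset.mem_singleton] at hwK
      rcases hwK with h | h | h | h | h | h
      · exact absurd h hws
      · exact absurd (h ▸ hw) hnc0a
      · exact absurd (h ▸ hw) hnc0b
      · exact absurd h.symm (G.ne_of_adj hw)
      · exact h
      · exact absurd h hwy
    -- the observation process
    have Os : Observed G S s := Observed.mem s hsS
    have Oa : Observed G S a := Observed.dom s a hsS ha
    have Ob : Observed G S b := Observed.dom s b hsS hb
    have Oc0 : Observed G S c0 := Observed.dom s c0 hsS hc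
    have Oe : Observed G S c1 := by
      refine Observed.prop b c1 Ob hbadj3 ?_
      intro w hw hne
      rcases hbchar w hw with rfl | rfl | rfl
      · exact Oa
      · exact Os
      · exact absurd rfl hne
    have Oy : Observed G S y := by
      refine Observed.prop c0 y Oc0 (hle hFy) ?_
      intro w hw hne
      rcases hc0nbr w hw with rfl | rfl | rfl
      · exact Os
      · exact absurd rfl hne
      · exact Oe
    intro w hmw
    have hwK : w ∈ ({s, a, b, c0, c1, y} : Finset V) := by
      rw [← hfib_eq]
      simp only [Finset.mem_filter, Finset.mem_univ, true_and]
      exact hmw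
    simp only [Finset.mem_insert, Finset.mem_singleton] at hwK
    rcases hwK with rfl | rfl | rfl | rfl | rfl | rfl
    exacts [Os, Oa, Ob, Oc0, Oe, Oy]

end Aux


theorem stmt18 {V : Type} [Fintype V] (G F : SimpleGraph V)
    [DecidableRel G.Adj] [DecidableRel F.Adj]
    (hclaw : ClawFree G) (hdiam : DiamondFree G)
    (hcubic : ∀ v, G.degree v = 3)
    (hle : F ≤ G) (h2reg : ∀ v, F.degree v = 2)
    (hbig : ∀ c : F.ConnectedComponent,
      6 ≤ Nat.card {a : V // F.connectedComponentMk a = c}) :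
    Nat.card F.ConnectedComponent ≤ pdNum G ∧
    ((∀ c : F.ConnectedComponent,
        Nat.card {a : V // F.connectedComponentMk a = c} = 6) →
      6 * pdNum G = Fintype.card V) := by
  classical
  have part1 : Nat.card F.ConnectedComponent ≤ pdNum G := by
    unfold pdNum
    apply le_csInf
    · exact ⟨Finset.univ.card, Finset.univ, rfl, fun v => Observed.mem v (by simp)⟩
    · rintro n ⟨S, hcard, hpds⟩
      have hex : ∀ c : F.ConnectedComponent,
          ∃ s, s ∈ (S : Set V) ∧ F.connectedComponentMk s = c := by
        intro c
        obtain ⟨s, hs1, hs2⟩ := comp_hits hclaw hdiam hcubic hle h2reg hbig hpds c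
        exact ⟨s, hs1, hs2⟩
      choose f hf1 hf2 using hex
      have hinj : Function.Injective
          (fun c => (⟨f c, by simpa using hf1 c⟩ : {x // x ∈ S})) := by
        intro c c' h
        have hfc : f c = f c' := by simpa [Subtype.ext_iff] using h
        rw [← hf2 c, ← hf2 c', hfc]
      calc Nat.card F.ConnectedComponent
          ≤ Nat.card {x // x ∈ S} := Nat.card_le_card_of_injective _ hinj
        _ = S.card := by simp [Nat.card_eq_fintype_card]
        _ = n := hcard
  refine ⟨part1, ?_⟩
  intro h6
  letI : Fintype F.ConnectedComponent := Fintype.ofFinite _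
  have hexend := fun c => exists_end hclaw hdiam hcubic hle h2reg hbig c
  choose g hg1 hg2 using hexend
  have hginj : Function.Injective g := by
    intro c c' h
    rw [← hg1 c, ← hg1 c', h]
  have hS0card : (Finset.univ.image g).card = Nat.card F.ConnectedComponent := by
    rw [Finset.card_image_of_injective _ hginj, Finset.card_univ,
      Nat.card_eq_fintype_card]
  have hpds : IsPDS G ((Finset.univ.image g : Finset V) : Set V) := by
    intro w
    have hmem : g (F.connectedComponentMk w) ∈
        ((Finset.univ.image g : Finset V) : Set V) := by
      simp only [Finset.coe_image, Set.mem_image, Finset.coe_univ, Set.mem_univ]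
      exact ⟨F.connectedComponentMk w, trivial, rfl⟩
    have hmk : F.connectedComponentMk w =
        F.connectedComponentMk (g (F.connectedComponentMk w)) := (hg1 _).symm
    exact comp_obs hclaw hdiam hcubic hle h2reg hbig h6
      (hg2 (F.connectedComponentMk w)) hmem w hmk
  have hub : pdNum G ≤ Nat.card F.ConnectedComponent := by
    unfold pdNum
    exact Nat.sInf_le ⟨Finset.univ.image g, hS0card, hpds⟩
  have hpd : pdNum G = Nat.card F.ConnectedComponent := le_antisymm hub part1
  have hcount : Fintype.card V = 6 * Nat.card F.ConnectedComponent := by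
    have e0 := Equiv.sigmaFiberEquiv F.connectedComponentMk
    calc Fintype.card V
        = Fintype.card ((c : F.ConnectedComponent) ×
            {a : V // F.connectedComponentMk a = c}) := (Fintype.card_congr e0).symm
      _ = ∑ c : F.ConnectedComponent,
            Fintype.card {a : V // F.connectedComponentMk a = c} := by
          rw [Fintype.card_sigma]
      _ = ∑ _c : F.ConnectedComponent, 6 := by
          refine Finset.sum_congr rfl ?_
          intro c _
          rw [← Nat.card_eq_fintype_card]
          exact h6 c
      _ = Fintype.card F.ConnectedComponent * 6 := by
          simp [Finset.sum_const, Finset.card_univ, mul_comm]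
      _ = 6 * Nat.card F.ConnectedComponent := by
          rw [Nat.card_eq_fintype_card]; ring
  rw [hpd]
  omega


end PaperPD
end
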